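/- arXiv:2106.11224 — 4 statements merged into one kernel-verified Lean document; each statement's English description precedes it below -/
import Mathlib

section
/- Suppose the impulsive system Σ satisfies Assumption 1 and there exist β* ∈ 𝒦𝓛 and γ* ∈ 𝒦∞ such that every solution satisfies, for all t > τ₀, ‖φ(t,t₀,φ₀,d₁,d₂)‖ ≤ β*(‖φ(τ₀⁺,t₀,φ₀,d₁,d₂)‖, t) + γ*(d). Then Σ is ISS, i.e., there exist β ∈ 𝒦𝓛 and γ ∈ 𝒦∞ such that ‖φ(t,t₀,φ₀,d₁,d₂)‖ ≤ β(‖φ₀‖, t) + γ(d) for all t ≥ t₀, all initial states φ₀ ∈ X and all inputs (d₁,d₂) ∈ 𝒰₁ × 𝒰₂. -/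
open Set Filter

/-- Class 𝒦: continuous, zero at zero, strictly increasing on `[0,∞)`. -/
def ClassK (f : ℝ → ℝ) : Prop :=
  ContinuousOn f (Ici 0) ∧ f 0 = 0 ∧ StrictMonoOn f (Ici 0)

/-- Class 𝒦∞: class 𝒦 and unbounded. -/
def ClassKInf (f : ℝ → ℝ) : Prop :=
  ClassK f ∧ Tendsto f atTop atTop

/-- Class 𝒫: continuous, nonnegative on `[0,∞)`, vanishing exactly at zero. -/
def ClassP (f : ℝ → ℝ) : Prop :=
  ContinuousOn f (Ici 0) ∧ (∀ r ≥ (0:ℝ), 0 ≤ f r) ∧ ∀ r ≥ (0:ℝ), (f r = 0 ↔ r = 0)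

/-- Class 𝒦𝓛. -/
def ClassKL (β : ℝ → ℝ → ℝ) : Prop :=
  (∀ t ≥ (0:ℝ), ClassK fun s => β s t) ∧
  ∀ s ≥ (0:ℝ), AntitoneOn (fun t => β s t) (Ici 0) ∧
    Tendsto (fun t => β s t) atTop (nhds 0)

/-- Supremum norm of a continuous-time input. -/
noncomputable def supNormC {U : Type*} [NormedAddCommGroup U] (d : ℝ → U) : ℝ :=
  ⨆ t, ‖d t‖

/-- Supremum norm of a discrete-time input. -/
noncomputable def supNormD {U : Type*} [NormedAddCommGroup U] (d : ℕ → U) : ℝ :=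
  ⨆ k, ‖d k‖

/-- Bounded continuous-time inputs. -/
def BddInputC {U : Type*} [NormedAddCommGroup U] (d : ℝ → U) : Prop :=
  BddAbove (range fun t => ‖d t‖)

/-- Bounded discrete-time inputs. -/
def BddInputD {U : Type*} [NormedAddCommGroup U] (d : ℕ → U) : Prop :=
  BddAbove (range fun k => ‖d k‖)

section Helpers

lemma K_mono {f : ℝ → ℝ} (hf : ClassK f) : MonotoneOn f (Ici 0) :=
  hf.2.2.monotoneOn

lemma K_nonneg {f : ℝ → ℝ} (hf : ClassK f) {r : ℝ} (hr : 0 ≤ r) : 0 ≤ f r := by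
  have := K_mono hf (mem_Ici.mpr le_rfl) (mem_Ici.mpr hr) hr
  rwa [hf.2.1] at this

lemma K_le {f : ℝ → ℝ} (hf : ClassK f) {a b : ℝ} (ha : 0 ≤ a) (hab : a ≤ b) :
    f a ≤ f b :=
  K_mono hf (mem_Ici.mpr ha) (mem_Ici.mpr (ha.trans hab)) hab

lemma K_add {f g : ℝ → ℝ} (hf : ClassK f) (hg : ClassK g) :
    ClassK (fun r => f r + g r) := by
  refine ⟨hf.1.add hg.1, by show f 0 + g 0 = 0; rw [hf.2.1, hg.2.1, add_zero], ?_⟩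
  intro a ha b hb h
  exact add_lt_add (hf.2.2 ha hb h) (hg.2.2 ha hb h)

lemma K_comp {f g : ℝ → ℝ} (hf : ClassK f) (hg : ClassK g) :
    ClassK (fun r => f (g r)) := by
  have hmap : MapsTo g (Ici 0) (Ici 0) := fun x hx => mem_Ici.mpr (K_nonneg hg hx)
  refine ⟨hf.1.comp hg.1 hmap, by show f (g 0) = 0; rw [hg.2.1, hf.2.1], ?_⟩
  intro a ha b hb h
  exact hf.2.2 (hmap ha) (hmap hb) (hg.2.2 ha hb h)

lemma K_const_mul {f : ℝ → ℝ} (hf : ClassK f) {c : ℝ} (hc : 0 < c) :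
    ClassK (fun r => c * f r) := by
  refine ⟨continuousOn_const.mul hf.1, by show c * f 0 = 0; rw [hf.2.1, mul_zero], ?_⟩
  intro a ha b hb h
  exact mul_lt_mul_of_pos_left (hf.2.2 ha hb h) hc

lemma K_mul_const {f : ℝ → ℝ} (hf : ClassK f) {c : ℝ} (hc : 0 < c) :
    ClassK (fun r => f r * c) := by
  have h := K_const_mul hf hc
  have e : (fun r => f r * c) = fun r => c * f r := by funext r; ring
  rw [e]; exact h

lemma KInf_add_left {f g : ℝ → ℝ} (hf : ClassKInf f) (hg : ClassK g) :
    ClassKInf (fun r => f r + g r) := by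
  refine ⟨K_add hf.1 hg, ?_⟩
  refine tendsto_atTop_mono' atTop ?_ hf.2
  filter_upwards [eventually_ge_atTop (0:ℝ)] with r hr
  linarith [K_nonneg hg hr]

lemma KInf_comp {f g : ℝ → ℝ} (hf : ClassKInf f) (hg : ClassKInf g) :
    ClassKInf (fun r => f (g r)) :=
  ⟨K_comp hf.1 hg.1, hf.2.comp hg.2⟩

lemma KInf_const_mul {f : ℝ → ℝ} (hf : ClassKInf f) {c : ℝ} (hc : 0 < c) :
    ClassKInf (fun r => c * f r) :=
  ⟨K_const_mul hf.1 hc, hf.2.const_mul_atTop hc⟩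

lemma K_weak {f : ℝ → ℝ} (hf : ClassK f) {a b : ℝ} (ha : 0 ≤ a) (hb : 0 ≤ b) :
    f (a + b) ≤ f (2 * a) + f (2 * b) := by
  rcases le_total a b with h | h
  · have h1 : f (a + b) ≤ f (2 * b) := K_le hf (by linarith) (by linarith)
    linarith [K_nonneg hf (by linarith : (0:ℝ) ≤ 2 * a)]
  · have h1 : f (a + b) ≤ f (2 * a) := K_le hf (by linarith) (by linarith)
    linarith [K_nonneg hf (by linarith : (0:ℝ) ≤ 2 * b)]

lemma range_norm_shift {U : Type*} [NormedAddCommGroup U] (d : ℝ → U) (s : ℝ) :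
    (range fun t => ‖d (t + s)‖) = range fun t => ‖d t‖ := by
  ext y
  constructor
  · rintro ⟨t, rfl⟩; exact ⟨t + s, rfl⟩
  · rintro ⟨t, rfl⟩; exact ⟨t - s, by simp⟩

lemma supNormC_shift {U : Type*} [NormedAddCommGroup U] (d : ℝ → U) (s : ℝ) :
    supNormC (fun t => d (t + s)) = supNormC d := by
  unfold supNormC
  rw [← sSup_range, ← sSup_range, range_norm_shift]

lemma bddInputC_shift {U : Type*} [NormedAddCommGroup U] {d : ℝ → U} (s : ℝ)
    (hd : BddInputC d) : BddInputC (fun t => d (t + s)) := by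
  unfold BddInputC at *
  rwa [range_norm_shift]

lemma supNormC_nonneg {U : Type*} [NormedAddCommGroup U] {d : ℝ → U}
    (hd : BddInputC d) : 0 ≤ supNormC d :=
  le_trans (norm_nonneg (d 0)) (le_ciSup hd 0)

lemma le_supNormD {U : Type*} [NormedAddCommGroup U] {d : ℕ → U}
    (hd : BddInputD d) (k : ℕ) : ‖d k‖ ≤ supNormD d :=
  le_ciSup hd k

end Helpers

/-- Proposition 1: if the impulsive system `Σ` satisfies Assumption 1 and
all solutions satisfy a `𝒦𝓛 + 𝒦∞` estimate in terms of the state `φ(τ₀⁺)` right after the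
first jump, for all `t > τ₀`, then `Σ` is ISS. -/
theorem stmt1
    {X U₁ U₂ : Type*} [NormedAddCommGroup X] [NormedAddCommGroup U₁] [NormedAddCommGroup U₂]
    -- the continuous dynamics φ_c and its axioms
    (φc : ℝ → ℝ → X → (ℝ → U₁) → X)
    (hcont : ∀ (t₀' : ℝ) (x : X) (d₁ : ℝ → U₁),
      ContinuousOn (fun t => φc t t₀' x d₁) (Ici t₀'))
    (hinit : ∀ (t₀' : ℝ) (x : X) (d₁ : ℝ → U₁), φc t₀' t₀' x d₁ = x)
    (hcausal : ∀ (t₀' t : ℝ) (x : X) (d₁ d₁' : ℝ → U₁), t₀' ≤ t →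
      (∀ s ∈ Icc t₀' t, d₁ s = d₁' s) → φc t t₀' x d₁ = φc t t₀' x d₁')
    (hcocycle : ∀ (t₀' τ' t : ℝ) (x : X) (d₁ : ℝ → U₁), t₀' ≤ τ' → τ' ≤ t →
      φc t t₀' x d₁ = φc t τ' (φc τ' t₀' x d₁) d₁)
    (hshift : ∀ (t t₀' s : ℝ) (x : X) (d₁ : ℝ → U₁), t₀' ≤ t →
      φc (t + s) (t₀' + s) x d₁ = φc t t₀' x (fun r => d₁ (r + s)))
    -- the impulse times, initial time, jump map and the impulsive solution map
    (τ : ℕ → ℝ) (hτ : StrictMono τ) (hτtop : Tendsto τ atTop atTop)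
    (t₀ : ℝ) (ht₀ : t₀ ≤ τ 0)
    (g : X → U₂ → X)
    (φ : ℝ → X → (ℝ → U₁) → (ℕ → U₂) → X)
    (hφ0 : ∀ (x : X) (d₁ : ℝ → U₁) (d₂ : ℕ → U₂), ∀ t ∈ Icc t₀ (τ 0),
      φ t x d₁ d₂ = φc t t₀ x d₁)
    (hφk : ∀ (x : X) (d₁ : ℝ → U₁) (d₂ : ℕ → U₂) (k : ℕ), ∀ t ∈ Ioc (τ k) (τ (k+1)),
      φ t x d₁ d₂ = φc t (τ k) (g (φ (τ k) x d₁ d₂) (d₂ k)) d₁)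
    -- Assumption 1
    (ξ η : ℝ → ℝ) (ξτ ητ : ℝ → ℝ → ℝ)
    (hξ : ClassKInf ξ) (hη : ClassKInf η)
    (hξτ : ∀ T ≥ (0:ℝ), ClassKInf (ξτ T)) (hητ : ∀ T ≥ (0:ℝ), ClassKInf (ητ T))
    (hA1c : ∀ T ≥ (0:ℝ), ∀ t ∈ Icc (0:ℝ) T, ∀ (x : X) (d₁ : ℝ → U₁), BddInputC d₁ →
      ‖φc t 0 x d₁‖ ≤ ξτ T ‖x‖ + ητ T (supNormC d₁))
    (hA1d : ∀ (x : X) (μ : U₂), ‖g x μ‖ ≤ ξ ‖x‖ + η ‖μ‖)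
    -- the hypothesis: a KL-estimate from the post-jump state at τ₀
    (hyp : ∃ (βs : ℝ → ℝ → ℝ) (γs : ℝ → ℝ), ClassKL βs ∧ ClassKInf γs ∧
      ∀ (x : X) (d₁ : ℝ → U₁) (d₂ : ℕ → U₂), BddInputC d₁ → BddInputD d₂ →
        ∀ t, τ 0 < t →
          ‖φ t x d₁ d₂‖ ≤ βs ‖g (φ (τ 0) x d₁ d₂) (d₂ 0)‖ t +
            γs (max (supNormC d₁) (supNormD d₂))) :
    -- conclusion: Σ is ISS
    ∃ (β : ℝ → ℝ → ℝ) (γ : ℝ → ℝ), ClassKL β ∧ ClassKInf γ ∧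
      ∀ (x : X) (d₁ : ℝ → U₁) (d₂ : ℕ → U₂), BddInputC d₁ → BddInputD d₂ →
        ∀ t, t₀ ≤ t →
          ‖φ t x d₁ d₂‖ ≤ β ‖x‖ t + γ (max (supNormC d₁) (supNormD d₂)) := by

  classical
  obtain ⟨βs, γs, hβs, hγs, hbound⟩ := hyp
  obtain ⟨N, hN⟩ := (hτtop.eventually_ge_atTop 0).exists
  -- core induction: uniform bound on [t₀, τ k]
  have key : ∀ k : ℕ, ∃ Ξ H : ℝ → ℝ, ClassKInf Ξ ∧ ClassKInf H ∧
      ∀ (x : X) (d₁ : ℝ → U₁) (d₂ : ℕ → U₂), BddInputC d₁ → BddInputD d₂ →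
        ∀ t ∈ Icc t₀ (τ k),
          ‖φ t x d₁ d₂‖ ≤ Ξ ‖x‖ + H (max (supNormC d₁) (supNormD d₂)) := by
    intro k
    induction k with
    | zero =>
      have hT0 : (0:ℝ) ≤ τ 0 - t₀ := by linarith
      refine ⟨ξτ (τ 0 - t₀), ητ (τ 0 - t₀), hξτ _ hT0, hητ _ hT0, ?_⟩
      intro x d₁ d₂ h1 h2 t ht
      have hb1 := bddInputC_shift (d := d₁) t₀ h1
      have heq : φ t x d₁ d₂ = φc (t - t₀) 0 x (fun r => d₁ (r + t₀)) := by
        rw [hφ0 x d₁ d₂ t ht]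
        have := hshift (t - t₀) 0 t₀ x d₁ (by linarith [ht.1])
        simpa using this
      rw [heq]
      have hA := hA1c (τ 0 - t₀) hT0 (t - t₀)
        ⟨by linarith [ht.1], by linarith [ht.2]⟩ x _ hb1
      rw [supNormC_shift] at hA
      refine hA.trans ?_
      have h3 : ητ (τ 0 - t₀) (supNormC d₁) ≤
          ητ (τ 0 - t₀) (max (supNormC d₁) (supNormD d₂)) :=
        K_le (hητ _ hT0).1 (supNormC_nonneg h1) (le_max_left _ _)
      linarith
    | succ k ih =>
      obtain ⟨Ξ, H, hΞ, hH, hb⟩ := ih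
      have hTk : (0:ℝ) ≤ τ (k+1) - τ k := by linarith [hτ (Nat.lt_succ_self k)]
      refine ⟨fun s => Ξ s + ξτ (τ (k+1) - τ k) (2 * ξ (2 * Ξ s)),
        fun r => H r + (ξτ (τ (k+1) - τ k) (2 * (ξ (2 * H r) + η r)) +
          ητ (τ (k+1) - τ k) r), ?_, ?_, ?_⟩
      · exact KInf_add_left hΞ
          (K_comp (hξτ _ hTk).1
            (K_const_mul (K_comp hξ.1 (K_const_mul hΞ.1 two_pos)) two_pos))
      · exact KInf_add_left hH
          (K_add
            (K_comp (hξτ _ hTk).1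
              (K_const_mul
                (K_add (K_comp hξ.1 (K_const_mul hH.1 two_pos)) hη.1) two_pos))
            (hητ _ hTk).1)
      · intro x d₁ d₂ h1 h2 t ht
        beta_reduce
        have hDnn : 0 ≤ max (supNormC d₁) (supNormD d₂) :=
          le_trans (supNormC_nonneg h1) (le_max_left _ _)
        have hxnn : (0:ℝ) ≤ ‖x‖ := norm_nonneg x
        have hΞnn : 0 ≤ Ξ ‖x‖ := K_nonneg hΞ.1 hxnn
        have hHnn : 0 ≤ H (max (supNormC d₁) (supNormD d₂)) := K_nonneg hH.1 hDnn
        rcases le_or_gt t (τ k) with hle | hgt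
        · have hmain := hb x d₁ d₂ h1 h2 t ⟨ht.1, hle⟩
          have e1 : 0 ≤ ξτ (τ (k+1) - τ k) (2 * ξ (2 * Ξ ‖x‖)) :=
            K_nonneg (hξτ _ hTk).1
              (by linarith [K_nonneg hξ.1 (by linarith : (0:ℝ) ≤ 2 * Ξ ‖x‖)])
          have e2 : 0 ≤ ξτ (τ (k+1) - τ k)
              (2 * (ξ (2 * H (max (supNormC d₁) (supNormD d₂))) +
                η (max (supNormC d₁) (supNormD d₂)))) +
              ητ (τ (k+1) - τ k) (max (supNormC d₁) (supNormD d₂)) := by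
            have n1 : 0 ≤ ξ (2 * H (max (supNormC d₁) (supNormD d₂))) :=
              K_nonneg hξ.1 (by linarith)
            have n2 : 0 ≤ η (max (supNormC d₁) (supNormD d₂)) :=
              K_nonneg hη.1 hDnn
            have n3 : 0 ≤ ξτ (τ (k+1) - τ k)
                (2 * (ξ (2 * H (max (supNormC d₁) (supNormD d₂))) +
                  η (max (supNormC d₁) (supNormD d₂)))) :=
              K_nonneg (hξτ _ hTk).1 (by linarith)
            have n4 : 0 ≤ ητ (τ (k+1) - τ k) (max (supNormC d₁) (supNormD d₂)) :=
              K_nonneg (hητ _ hTk).1 hDnn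
            linarith
          linarith
        · have ht0k : t₀ ≤ τ k := le_trans ht₀ (hτ.monotone (Nat.zero_le k))
          have heq : φ t x d₁ d₂ =
              φc (t - τ k) 0 (g (φ (τ k) x d₁ d₂) (d₂ k)) (fun r => d₁ (r + τ k)) := by
            rw [hφk x d₁ d₂ k t ⟨hgt, ht.2⟩]
            have := hshift (t - τ k) 0 (τ k) (g (φ (τ k) x d₁ d₂) (d₂ k)) d₁
              (by linarith)
            simpa using this
          have hb1 := bddInputC_shift (d := d₁) (τ k) h1
          have hA := hA1c (τ (k+1) - τ k) hTk (t - τ k)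
            ⟨by linarith, by linarith [ht.2]⟩ (g (φ (τ k) x d₁ d₂) (d₂ k)) _ hb1
          rw [supNormC_shift] at hA
          rw [heq]
          refine hA.trans ?_
          have hφτk : ‖φ (τ k) x d₁ d₂‖ ≤
              Ξ ‖x‖ + H (max (supNormC d₁) (supNormD d₂)) :=
            hb x d₁ d₂ h1 h2 (τ k) ⟨ht0k, le_rfl⟩
          have hgb : ‖g (φ (τ k) x d₁ d₂) (d₂ k)‖ ≤
              ξ (2 * Ξ ‖x‖) + (ξ (2 * H (max (supNormC d₁) (supNormD d₂))) +
                η (max (supNormC d₁) (supNormD d₂))) := by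
            have h3 := hA1d (φ (τ k) x d₁ d₂) (d₂ k)
            have h4 : ξ ‖φ (τ k) x d₁ d₂‖ ≤
                ξ (Ξ ‖x‖ + H (max (supNormC d₁) (supNormD d₂))) :=
              K_le hξ.1 (norm_nonneg _) hφτk
            have h5 := K_weak hξ.1 hΞnn hHnn
            have h6 : η ‖d₂ k‖ ≤ η (max (supNormC d₁) (supNormD d₂)) :=
              K_le hη.1 (norm_nonneg _)
                (le_trans (le_supNormD h2 k) (le_max_right _ _))
            linarith
          have nn1 : 0 ≤ ξ (2 * Ξ ‖x‖) := K_nonneg hξ.1 (by linarith)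
          have nn2 : 0 ≤ ξ (2 * H (max (supNormC d₁) (supNormD d₂))) +
              η (max (supNormC d₁) (supNormD d₂)) :=
            add_nonneg (K_nonneg hξ.1 (by linarith)) (K_nonneg hη.1 hDnn)
          have h7 : ξτ (τ (k+1) - τ k) ‖g (φ (τ k) x d₁ d₂) (d₂ k)‖ ≤
              ξτ (τ (k+1) - τ k) (ξ (2 * Ξ ‖x‖) +
                (ξ (2 * H (max (supNormC d₁) (supNormD d₂))) +
                  η (max (supNormC d₁) (supNormD d₂)))) :=
            K_le (hξτ _ hTk).1 (norm_nonneg _) hgb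
          have h8 := K_weak (hξτ _ hTk).1 nn1 nn2
          have h9 : ητ (τ (k+1) - τ k) (supNormC d₁) ≤
              ητ (τ (k+1) - τ k) (max (supNormC d₁) (supNormD d₂)) :=
            K_le (hητ _ hTk).1 (supNormC_nonneg h1) (le_max_left _ _)
          linarith
  obtain ⟨Ξ, H, hΞ, hH, hb⟩ := key N
  refine ⟨fun s t => βs (2 * ξ (2 * Ξ s)) (max t 0) + Ξ s * Real.exp (τ N - t),
    fun r => γs r + (βs (2 * (ξ (2 * H r) + η r)) 0 + H r), ?_, ?_, ?_⟩
  · constructor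
    · intro t ht
      have hmax : max t 0 = t := max_eq_left ht
      simp only [hmax]
      exact K_add
        (K_comp (hβs.1 t ht)
          (K_const_mul (K_comp hξ.1 (K_const_mul hΞ.1 two_pos)) two_pos))
        (K_mul_const hΞ.1 (Real.exp_pos _))
    · intro s hs
      have hΞs : 0 ≤ Ξ s := K_nonneg hΞ.1 hs
      have hc : 0 ≤ 2 * ξ (2 * Ξ s) :=
        by linarith [K_nonneg hξ.1 (by linarith : (0:ℝ) ≤ 2 * Ξ s)]
      constructor
      · intro a ha b hb' hab
        simp only
        rw [max_eq_left (mem_Ici.mp ha), max_eq_left (mem_Ici.mp hb')]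
        have e1 : βs (2 * ξ (2 * Ξ s)) b ≤ βs (2 * ξ (2 * Ξ s)) a :=
          (hβs.2 _ hc).1 ha hb' hab
        have e2 : Ξ s * Real.exp (τ N - b) ≤ Ξ s * Real.exp (τ N - a) :=
          mul_le_mul_of_nonneg_left (Real.exp_le_exp.mpr (by linarith)) hΞs
        linarith
      · have t1 : Tendsto (fun t => βs (2 * ξ (2 * Ξ s)) (max t 0)) atTop (nhds 0) := by
          refine ((hβs.2 _ hc).2).congr' ?_
          filter_upwards [eventually_ge_atTop (0:ℝ)] with t ht
          rw [max_eq_left ht]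
        have t2 : Tendsto (fun t : ℝ => Ξ s * Real.exp (τ N - t)) atTop (nhds 0) := by
          have h3 : Tendsto (fun t : ℝ => τ N - t) atTop atBot := by
            have := tendsto_atBot_add_const_left atTop (τ N)
              (tendsto_neg_atTop_atBot (G := ℝ))
            simpa [sub_eq_add_neg] using this
          have h4 : Tendsto (fun t : ℝ => Real.exp (τ N - t)) atTop (nhds 0) :=
            Real.tendsto_exp_atBot.comp h3
          simpa using h4.const_mul (Ξ s)
        simpa using t1.add t2
  · refine KInf_add_left hγs ?_
    exact K_add
      (K_comp (hβs.1 0 le_rfl)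
        (K_const_mul (K_add (K_comp hξ.1 (K_const_mul hH.1 two_pos)) hη.1) two_pos))
      hH.1
  · intro x d₁ d₂ h1 h2 t ht
    beta_reduce
    have hDnn : 0 ≤ max (supNormC d₁) (supNormD d₂) :=
      le_trans (supNormC_nonneg h1) (le_max_left _ _)
    have hxnn : (0:ℝ) ≤ ‖x‖ := norm_nonneg x
    have hΞnn : 0 ≤ Ξ ‖x‖ := K_nonneg hΞ.1 hxnn
    have hHnn : 0 ≤ H (max (supNormC d₁) (supNormD d₂)) := K_nonneg hH.1 hDnn
    have nn1 : 0 ≤ ξ (2 * Ξ ‖x‖) := K_nonneg hξ.1 (by linarith)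
    have nn2 : 0 ≤ ξ (2 * H (max (supNormC d₁) (supNormD d₂))) +
        η (max (supNormC d₁) (supNormD d₂)) :=
      add_nonneg (K_nonneg hξ.1 (by linarith)) (K_nonneg hη.1 hDnn)
    have hc1 : 0 ≤ 2 * ξ (2 * Ξ ‖x‖) := by linarith
    have hc2 : 0 ≤ 2 * (ξ (2 * H (max (supNormC d₁) (supNormD d₂))) +
        η (max (supNormC d₁) (supNormD d₂))) := by linarith
    rcases le_or_gt t (τ N) with hle | hgt
    · have hmain := hb x d₁ d₂ h1 h2 t ⟨ht, hle⟩
      have e1 : Ξ ‖x‖ ≤ Ξ ‖x‖ * Real.exp (τ N - t) :=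
        le_mul_of_one_le_right hΞnn (Real.one_le_exp (by linarith))
      have e2 : 0 ≤ βs (2 * ξ (2 * Ξ ‖x‖)) (max t 0) :=
        K_nonneg (hβs.1 _ (le_max_right t 0)) hc1
      have e3 : 0 ≤ γs (max (supNormC d₁) (supNormD d₂)) := K_nonneg hγs.1 hDnn
      have e4 : 0 ≤ βs (2 * (ξ (2 * H (max (supNormC d₁) (supNormD d₂))) +
          η (max (supNormC d₁) (supNormD d₂)))) 0 :=
        K_nonneg (hβs.1 0 le_rfl) hc2
      linarith
    · have htnn : (0:ℝ) ≤ t := le_trans hN hgt.le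
      have hτ0t : τ 0 < t := lt_of_le_of_lt (hτ.monotone (Nat.zero_le N)) hgt
      have hmain := hbound x d₁ d₂ h1 h2 t hτ0t
      have hφτ0 : ‖φ (τ 0) x d₁ d₂‖ ≤
          Ξ ‖x‖ + H (max (supNormC d₁) (supNormD d₂)) :=
        hb x d₁ d₂ h1 h2 (τ 0) ⟨ht₀, hτ.monotone (Nat.zero_le N)⟩
      have hgb : ‖g (φ (τ 0) x d₁ d₂) (d₂ 0)‖ ≤
          ξ (2 * Ξ ‖x‖) + (ξ (2 * H (max (supNormC d₁) (supNormD d₂))) +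
            η (max (supNormC d₁) (supNormD d₂))) := by
        have h3 := hA1d (φ (τ 0) x d₁ d₂) (d₂ 0)
        have h4 : ξ ‖φ (τ 0) x d₁ d₂‖ ≤
            ξ (Ξ ‖x‖ + H (max (supNormC d₁) (supNormD d₂))) :=
          K_le hξ.1 (norm_nonneg _) hφτ0
        have h5 := K_weak hξ.1 hΞnn hHnn
        have h6 : η ‖d₂ 0‖ ≤ η (max (supNormC d₁) (supNormD d₂)) :=
          K_le hη.1 (norm_nonneg _)
            (le_trans (le_supNormD h2 0) (le_max_right _ _))
        linarith
      have hβ1 : βs ‖g (φ (τ 0) x d₁ d₂) (d₂ 0)‖ t ≤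
          βs (ξ (2 * Ξ ‖x‖) + (ξ (2 * H (max (supNormC d₁) (supNormD d₂))) +
            η (max (supNormC d₁) (supNormD d₂)))) t :=
        K_le (hβs.1 t htnn) (norm_nonneg _) hgb
      have hβ2 := K_weak (hβs.1 t htnn) nn1 nn2
      have hβ3 : βs (2 * (ξ (2 * H (max (supNormC d₁) (supNormD d₂))) +
          η (max (supNormC d₁) (supNormD d₂)))) t ≤
          βs (2 * (ξ (2 * H (max (supNormC d₁) (supNormD d₂))) +
          η (max (supNormC d₁) (supNormD d₂)))) 0 :=
        (hβs.2 _ hc2).1 (mem_Ici.mpr le_rfl) (mem_Ici.mpr htnn) htnn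
      have hexp : 0 ≤ Ξ ‖x‖ * Real.exp (τ N - t) :=
        mul_nonneg hΞnn (Real.exp_pos _).le
      rw [max_eq_left htnn]
      linarith
end

section
/- For every ε > 0, every twice continuously differentiable x : [0,l] → ℝ with x(0) = x(l) = 0, every y, ξ₂ ∈ ℝ and every continuous ξ₁ : [0,l] → ℝ, the following estimate holds: 2∫₀ˡ x(z)·(a² x''(z) + Φ(x(z)) + B(z) y + ξ₁(z)) dz + 2y·(c² y + ∫₀ˡ D(z) x(z) dz + ξ₂) ≤ (−2π²a²/l² + ε)·‖x‖²_{L²} + 2·‖B + D‖_{L²}·‖x‖_{L²}·|y| + (2c² + ε)·y² + ε⁻¹·(‖ξ₁‖²_{L²} + ξ₂²). (In matrix form this is the estimate U̇ ≤ ζᵀ(Ã₀ + εI)ζ + ε⁻¹‖ξ‖² for U(x,y) = ‖x‖²_{L²} + y², ζ = (‖x‖_{L²}, |y|)ᵀ and Ã₀ the symmetric 2×2 matrix with diagonal entries −2π²a²/l², 2c² and off-diagonal entries ‖B+D‖_{L²}.) -/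
open Set Real

section Aux
open intervalIntegral Filter


-- Cauchy-Schwarz for interval integrals of continuous functions
lemma csq (l : ℝ) (hl : 0 ≤ l) (f g : ℝ → ℝ) (hf : ContinuousOn f (Icc 0 l))
    (hg : ContinuousOn g (Icc 0 l)) :
    (∫ z in (0:ℝ)..l, f z * g z) ≤
      Real.sqrt (∫ z in (0:ℝ)..l, (f z)^2) * Real.sqrt (∫ z in (0:ℝ)..l, (g z)^2) := by
  have huIcc : uIcc (0:ℝ) l = Icc 0 l := uIcc_of_le hl
  have hif : IntervalIntegrable (fun z => (f z)^2) MeasureTheory.volume 0 l :=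
    ((hf.pow 2).mono huIcc.subset).intervalIntegrable
  have hig : IntervalIntegrable (fun z => (g z)^2) MeasureTheory.volume 0 l :=
    ((hg.pow 2).mono huIcc.subset).intervalIntegrable
  have hifg : IntervalIntegrable (fun z => f z * g z) MeasureTheory.volume 0 l :=
    ((hf.mul hg).mono huIcc.subset).intervalIntegrable
  set F := ∫ z in (0:ℝ)..l, (f z)^2 with hF
  set G := ∫ z in (0:ℝ)..l, (g z)^2 with hG
  set C := ∫ z in (0:ℝ)..l, f z * g z with hC
  have hF0 : 0 ≤ F := integral_nonneg hl (fun u _ => sq_nonneg _)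
  have hG0 : 0 ≤ G := integral_nonneg hl (fun u _ => sq_nonneg _)
  have key : ∀ t : ℝ, 0 ≤ F * t^2 + (-2*C) * t + G := by
    intro t
    have : ∀ z, (t * f z - g z)^2 = t^2 * (f z)^2 + (-2*t) * (f z * g z) + (g z)^2 := by
      intro z; ring
    have h1 : 0 ≤ ∫ z in (0:ℝ)..l, (t * f z - g z)^2 :=
      integral_nonneg hl (fun u _ => sq_nonneg _)
    have h2 : (∫ z in (0:ℝ)..l, (t * f z - g z)^2) = t^2 * F + (-2*t) * C + G := by
      simp_rw [this]
      rw [integral_add (((hif.const_mul _).add (hifg.const_mul _))) hig,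
        integral_add (hif.const_mul _) (hifg.const_mul _),
        integral_const_mul, integral_const_mul]
    linarith [h1, h2]
  have hd : discrim F (-2*C) G ≤ 0 := discrim_le_zero (fun t => by nlinarith [key t])
  rw [discrim] at hd
  have h4 : C^2 ≤ F * G := by nlinarith
  calc C ≤ |C| := le_abs_self _
    _ = Real.sqrt (C^2) := (Real.sqrt_sq_eq_abs C).symm
    _ ≤ Real.sqrt (F * G) := Real.sqrt_le_sqrt h4
    _ = Real.sqrt F * Real.sqrt G := Real.sqrt_mul hF0 _


-- derivative of cotangent helper
lemma hasDerivAt_g (l : ℝ) (hl : 0 < l) (z : ℝ) (hz : z ∈ Ioo 0 l) :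
    HasDerivAt (fun u => (π/l) * (Real.cos (π/l*u) / Real.sin (π/l*u)))
      (-(π/l)^2 - ((π/l) * (Real.cos (π/l*z) / Real.sin (π/l*z)))^2) z := by
  set k := π/l with hk
  have hkpos : 0 < k := div_pos Real.pi_pos hl
  have hkz1 : 0 < k * z := mul_pos hkpos hz.1
  have hkz2 : k * z < π := by
    calc k * z < k * l := by nlinarith [hz.2]
      _ = π := by rw [hk]; field_simp
  have hs : Real.sin (k*z) ≠ 0 := ne_of_gt (Real.sin_pos_of_pos_of_lt_pi hkz1 hkz2)
  have hkz : HasDerivAt (fun u : ℝ => k * u) k z := by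
    simpa using (hasDerivAt_id z).const_mul k
  have hcos : HasDerivAt (fun u => Real.cos (k*u)) (-Real.sin (k*z) * k) z := hkz.cos
  have hsin : HasDerivAt (fun u => Real.sin (k*u)) (Real.cos (k*z) * k) z := hkz.sin
  have hdiv := (hcos.div hsin hs).const_mul k
  refine hdiv.congr_deriv ?_
  have hpyth := Real.sin_sq_add_cos_sq (k*z)
  field_simp

lemma wirtinger (l : ℝ) (hl : 0 < l) (x x' : ℝ → ℝ)
    (hx : ∀ z ∈ Icc (0:ℝ) l, HasDerivAt x (x' z) z)
    (hx'c : ContinuousOn x' (Icc 0 l))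
    (hx0 : x 0 = 0) (hxl : x l = 0) :
    (π/l)^2 * (∫ z in (0:ℝ)..l, (x z)^2) ≤ ∫ z in (0:ℝ)..l, (x' z)^2 := by
  set k := π/l with hk
  have hkpos : 0 < k := div_pos Real.pi_pos hl
  have hkl : k * l = π := by rw [hk]; field_simp
  set g : ℝ → ℝ := fun u => k * (Real.cos (k*u) / Real.sin (k*u)) with hg
  have hxc : ContinuousOn x (Icc 0 l) := fun z hz =>
    (hx z hz).continuousAt.continuousWithinAt
  set h : ℝ → ℝ := fun z => (x' z)^2 - k^2 * (x z)^2 with hh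
  have hhc : ContinuousOn h (Icc 0 l) := by
    apply ContinuousOn.sub (hx'c.pow 2)
    exact (continuousOn_const.mul (hxc.pow 2))
  set A : ℝ := ∫ z in (0:ℝ)..l, h z with hA
  -- integrability of h on subintervals of [0,l]
  have hhint : ∀ u v, u ∈ Icc (0:ℝ) l → v ∈ Icc (0:ℝ) l →
      IntervalIntegrable h MeasureTheory.volume u v := by
    intro u v hu hv
    exact ((hhc.mono (uIcc_subset_Icc hu hv)).intervalIntegrable)
  -- sin (k*u) positive on Ioo 0 l
  have hsinpos : ∀ u ∈ Ioo (0:ℝ) l, 0 < Real.sin (k*u) := by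
    intro u hu
    apply Real.sin_pos_of_pos_of_lt_pi (mul_pos hkpos hu.1)
    calc k * u < k * l := by nlinarith [hu.2]
      _ = π := hkl
  -- continuity of g on Ioo 0 l
  have hgc : ContinuousOn g (Ioo 0 l) := by
    apply continuousOn_const.mul
    apply ContinuousOn.div
    · exact (Real.continuous_cos.comp (continuous_const.mul continuous_id)).continuousOn
    · exact (Real.continuous_sin.comp (continuous_const.mul continuous_id)).continuousOn
    · intro u hu; exact ne_of_gt (hsinpos u hu)
  -- Step 1 : pointwise inequality ψ δ ≤ φ δ for δ ∈ Ioo 0 (l/2)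
  have step1 : ∀ δ ∈ Ioo (0:ℝ) (l/2),
      g (l-δ) * (x (l-δ))^2 - g δ * (x δ)^2 ≤ ∫ z in δ..(l-δ), h z := by
    intro δ hδ
    have hδl : δ ≤ l - δ := by linarith [hδ.2]
    have hsub : Icc δ (l-δ) ⊆ Ioo 0 l := fun u hu => ⟨lt_of_lt_of_le hδ.1 hu.1, by
      have := hu.2; linarith [hδ.1]⟩
    have hsub2 : Icc δ (l-δ) ⊆ Icc 0 l := fun u hu =>
      ⟨le_of_lt (hsub hu).1, le_of_lt (hsub hu).2⟩
    -- derivative of G = g * x^2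
    have hG : ∀ u ∈ Icc δ (l-δ), HasDerivAt (fun u => g u * (x u)^2)
        ((-k^2 - (g u)^2) * (x u)^2 + g u * (2 * x u * x' u)) u := by
      intro u hu
      have h1 := hasDerivAt_g l hl u (hsub hu)
      have h2 : HasDerivAt (fun u => (x u)^2) (2 * x u * x' u) u := by
        have := (hx u (hsub2 hu)).fun_pow 2
        simpa [mul_comm] using this
      simpa [hg, hk] using h1.fun_mul h2
    -- integrability of G'
    have hG'c : ContinuousOn (fun u => (-k^2 - (g u)^2) * (x u)^2 + g u * (2 * x u * x' u))
        (Icc δ (l-δ)) := by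
      have hgc' : ContinuousOn g (Icc δ (l-δ)) := hgc.mono hsub
      have hxc' : ContinuousOn x (Icc δ (l-δ)) := hxc.mono hsub2
      have hx'c' : ContinuousOn x' (Icc δ (l-δ)) := hx'c.mono hsub2
      apply ContinuousOn.add
      · exact (continuousOn_const.sub (hgc'.pow 2)).mul (hxc'.pow 2)
      · exact hgc'.mul ((continuousOn_const.mul hxc').mul hx'c')
    have hG'int : IntervalIntegrable
        (fun u => (-k^2 - (g u)^2) * (x u)^2 + g u * (2 * x u * x' u))
        MeasureTheory.volume δ (l-δ) :=
      (hG'c.mono (uIcc_of_le hδl).subset).intervalIntegrable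
    have hftc : (∫ u in δ..(l-δ), ((-k^2 - (g u)^2) * (x u)^2 + g u * (2 * x u * x' u)))
        = g (l-δ) * (x (l-δ))^2 - g δ * (x δ)^2 := by
      apply integral_eq_sub_of_hasDerivAt (f := fun u => g u * (x u)^2)
      · intro u hu
        exact hG u ((uIcc_of_le hδl).subset hu)
      · exact hG'int
    have hdiff : ∀ u ∈ Icc δ (l-δ),
        h u - ((-k^2 - (g u)^2) * (x u)^2 + g u * (2 * x u * x' u))
          = (x' u - g u * x u)^2 := by
      intro u _; simp only [hh]; ring
    have hnn : 0 ≤ ∫ u in δ..(l-δ),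
        (h u - ((-k^2 - (g u)^2) * (x u)^2 + g u * (2 * x u * x' u))) := by
      rw [integral_congr (g := fun u => (x' u - g u * x u)^2) ?_]
      · exact integral_nonneg hδl (fun u _ => sq_nonneg _)
      · intro u hu; exact hdiff u ((uIcc_of_le hδl).subset hu)
    have hint1 : IntervalIntegrable h MeasureTheory.volume δ (l-δ) :=
      hhint δ (l-δ) ⟨le_of_lt hδ.1, by linarith⟩ ⟨by linarith [hδ.1], by linarith [hδ.1]⟩
    rw [integral_sub hint1 hG'int, hftc] at hnn
    linarith
  -- Step 2 : φ δ → A as δ → 0+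
  have hmem : Ioo (0:ℝ) (l/2) ∈ nhdsWithin (0:ℝ) (Ioi 0) :=
    Ioo_mem_nhdsGT_of_mem ⟨le_refl 0, half_pos hl⟩
  obtain ⟨M, hM⟩ := (isCompact_Icc).exists_bound_of_continuousOn hhc
  have hM0 : 0 ≤ M := le_trans (norm_nonneg _) (hM 0 ⟨le_refl 0, le_of_lt hl⟩)
  have step2 : Tendsto (fun δ => ∫ z in δ..(l-δ), h z) (nhdsWithin 0 (Ioi 0)) (nhds A) := by
    have key : ∀ δ ∈ Ioo (0:ℝ) (l/2), ‖(∫ z in δ..(l-δ), h z) - A‖ ≤ 2*M*δ := by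
      intro δ hδ
      have h1 : δ ∈ Icc (0:ℝ) l := ⟨le_of_lt hδ.1, by linarith [hδ.2]⟩
      have h2 : l - δ ∈ Icc (0:ℝ) l := ⟨by linarith [hδ.1, hδ.2], by linarith [hδ.1]⟩
      have h0 : (0:ℝ) ∈ Icc (0:ℝ) l := ⟨le_refl 0, le_of_lt hl⟩
      have hL : l ∈ Icc (0:ℝ) l := ⟨le_of_lt hl, le_refl l⟩
      have e1 : (∫ z in (0:ℝ)..δ, h z) + (∫ z in δ..(l-δ), h z) = ∫ z in (0:ℝ)..(l-δ), h z :=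
        integral_add_adjacent_intervals (hhint 0 δ h0 h1) (hhint δ (l-δ) h1 h2)
      have e2 : (∫ z in (0:ℝ)..(l-δ), h z) + (∫ z in (l-δ)..l, h z) = A :=
        integral_add_adjacent_intervals (hhint 0 (l-δ) h0 h2) (hhint (l-δ) l h2 hL)
      have b1 : ‖∫ z in (0:ℝ)..δ, h z‖ ≤ M * |δ - 0| := by
        apply norm_integral_le_of_norm_le_const
        intro u hu
        rw [uIoc_of_le (le_of_lt hδ.1)] at hu
        exact hM u ⟨le_of_lt hu.1, le_trans hu.2 h1.2⟩
      have b2 : ‖∫ z in (l-δ)..l, h z‖ ≤ M * |l - (l-δ)| := by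
        apply norm_integral_le_of_norm_le_const
        intro u hu
        rw [uIoc_of_le (by linarith [hδ.1] : l - δ ≤ l)] at hu
        exact hM u ⟨le_trans h2.1 (le_of_lt hu.1), hu.2⟩
      have hb1 : |δ - 0| = δ := by rw [sub_zero, abs_of_pos hδ.1]
      have hb2 : |l - (l-δ)| = δ := by rw [show l - (l-δ) = δ by ring, abs_of_pos hδ.1]
      rw [hb1] at b1; rw [hb2] at b2
      have : (∫ z in δ..(l-δ), h z) - A = -(∫ z in (0:ℝ)..δ, h z) - (∫ z in (l-δ)..l, h z) := by
        linarith [e1, e2]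
      rw [this]
      calc ‖-(∫ z in (0:ℝ)..δ, h z) - (∫ z in (l-δ)..l, h z)‖
          ≤ ‖∫ z in (0:ℝ)..δ, h z‖ + ‖∫ z in (l-δ)..l, h z‖ := by
            simpa using norm_sub_le (-(∫ z in (0:ℝ)..δ, h z)) (∫ z in (l-δ)..l, h z)
        _ ≤ 2*M*δ := by linarith
    have hz : Tendsto (fun δ => (∫ z in δ..(l-δ), h z) - A) (nhdsWithin 0 (Ioi 0)) (nhds 0) := by
      apply squeeze_zero_norm' (Filter.eventually_of_mem hmem key)
      have : Tendsto (fun δ : ℝ => 2*M*δ) (nhdsWithin 0 (Ioi 0)) (nhds (2*M*0)) :=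
        (tendsto_const_nhds.mul (tendsto_id.mono_left nhdsWithin_le_nhds))
      simpa using this
    have := hz.add_const A
    simpa using this
  -- Step 3 : boundary term → 0
  have hslope0 : Tendsto (fun δ => x δ / δ) (nhdsWithin 0 (Ioi 0)) (nhds (x' 0)) := by
    have h1 := (hasDerivAt_iff_tendsto_slope.mp (hx 0 ⟨le_refl 0, le_of_lt hl⟩))
    have h2 : Tendsto (slope x 0) (nhdsWithin 0 (Ioi 0)) (nhds (x' 0)) :=
      h1.mono_left (nhdsWithin_mono 0 (fun u hu => ne_of_gt hu))
    apply h2.congr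
    intro u; simp [slope_def_field, hx0]
  have hslopel : Tendsto (fun δ => x (l-δ) / (-δ)) (nhdsWithin 0 (Ioi 0)) (nhds (x' l)) := by
    have h1 := (hasDerivAt_iff_tendsto_slope.mp (hx l ⟨le_of_lt hl, le_refl l⟩))
    have hcomp : Tendsto (fun δ : ℝ => l - δ) (nhdsWithin 0 (Ioi 0))
        (nhdsWithin l {l}ᶜ) := by
      apply tendsto_nhdsWithin_of_tendsto_nhds_of_eventually_within
      · have : Tendsto (fun δ : ℝ => l - δ) (nhds 0) (nhds (l - 0)) :=
          tendsto_const_nhds.sub tendsto_id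
        simpa using this.mono_left nhdsWithin_le_nhds
      · apply Filter.eventually_of_mem self_mem_nhdsWithin
        intro u hu
        simp only [Set.mem_compl_iff, Set.mem_singleton_iff]
        intro hcon
        have hu' : (0:ℝ) < u := hu
        have : u = 0 := by linarith [hcon]
        linarith
    have h2 := h1.comp hcomp
    apply h2.congr
    intro u
    simp only [Function.comp, slope_def_field, hxl]
    rw [show l - u - l = -u by ring]
    simp
  -- sin(kδ)/(kδ) → 1 and its inverse
  have hsinlim : Tendsto (fun δ => Real.sin (k*δ) / (k*δ)) (nhdsWithin 0 (Ioi 0)) (nhds 1) := by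
    have h1 := hasDerivAt_iff_tendsto_slope.mp (Real.hasDerivAt_sin 0)
    rw [Real.cos_zero] at h1
    have hcomp : Tendsto (fun δ : ℝ => k*δ) (nhdsWithin 0 (Ioi 0))
        (nhdsWithin 0 {(0:ℝ)}ᶜ) := by
      apply tendsto_nhdsWithin_of_tendsto_nhds_of_eventually_within
      · have : Tendsto (fun δ : ℝ => k*δ) (nhds 0) (nhds (k*0)) :=
          tendsto_const_nhds.mul tendsto_id
        simpa using this.mono_left nhdsWithin_le_nhds
      · apply Filter.eventually_of_mem self_mem_nhdsWithin
        intro u hu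
        have hu' : (0:ℝ) < u := hu
        simp only [Set.mem_compl_iff, Set.mem_singleton_iff]
        positivity
    have h2 := h1.comp hcomp
    apply h2.congr
    intro u
    simp [Function.comp, slope_def_field]
  have hratio : Tendsto (fun δ => (k*δ) / Real.sin (k*δ)) (nhdsWithin 0 (Ioi 0)) (nhds 1) := by
    have := hsinlim.inv₀ one_ne_zero
    simp only [inv_div, inv_one] at this
    exact this
  have hcoslim : Tendsto (fun δ => Real.cos (k*δ)) (nhdsWithin 0 (Ioi 0)) (nhds 1) := by
    have : Tendsto (fun δ : ℝ => Real.cos (k*δ)) (nhds 0) (nhds (Real.cos (k*0))) :=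
      (Real.continuous_cos.comp (continuous_const.mul continuous_id)).continuousAt.tendsto
    simp only [mul_zero, Real.cos_zero] at this
    exact this.mono_left nhdsWithin_le_nhds
  have hidlim : Tendsto (fun δ : ℝ => δ) (nhdsWithin 0 (Ioi 0)) (nhds 0) :=
    tendsto_id.mono_left nhdsWithin_le_nhds
  -- T1 : g δ * x δ ^ 2 → 0
  have T1lim : Tendsto (fun δ => g δ * (x δ)^2) (nhdsWithin 0 (Ioi 0)) (nhds 0) := by
    have hprod : Tendsto (fun δ => Real.cos (k*δ) * ((k*δ)/Real.sin (k*δ)) * (x δ/δ)^2 * δ)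
        (nhdsWithin 0 (Ioi 0)) (nhds (1 * 1 * (x' 0)^2 * 0)) :=
      ((hcoslim.mul hratio).mul (hslope0.pow 2)).mul hidlim
    rw [show (1:ℝ) * 1 * (x' 0)^2 * 0 = 0 by ring] at hprod
    apply hprod.congr'
    apply Filter.eventually_of_mem hmem
    intro δ hδ
    have hδl2 : δ ∈ Ioo (0:ℝ) l := ⟨hδ.1, by linarith [hδ.2]⟩
    have hs := hsinpos δ hδl2
    have hδ0 : δ ≠ 0 := ne_of_gt hδ.1
    simp only [hg]
    field_simp
  -- T2 : g (l-δ) * x (l-δ) ^ 2 → 0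
  have T2lim : Tendsto (fun δ => g (l-δ) * (x (l-δ))^2) (nhdsWithin 0 (Ioi 0)) (nhds 0) := by
    have hprod : Tendsto
        (fun δ => -(Real.cos (k*δ) * ((k*δ)/Real.sin (k*δ))) * (x (l-δ)/(-δ))^2 * δ)
        (nhdsWithin 0 (Ioi 0)) (nhds (-(1 * 1) * (x' l)^2 * 0)) :=
      (((hcoslim.mul hratio).neg).mul (hslopel.pow 2)).mul hidlim
    rw [show -((1:ℝ) * 1) * (x' l)^2 * 0 = 0 by ring] at hprod
    apply hprod.congr'
    apply Filter.eventually_of_mem hmem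
    intro δ hδ
    have hδl2 : δ ∈ Ioo (0:ℝ) l := ⟨hδ.1, by linarith [hδ.2]⟩
    have hs := hsinpos δ hδl2
    have hδ0 : δ ≠ 0 := ne_of_gt hδ.1
    have hklδ : k * (l - δ) = π - k*δ := by rw [mul_sub, hkl]
    have hcs : Real.cos (k*(l-δ)) = -Real.cos (k*δ) := by
      rw [hklδ, Real.cos_pi_sub]
    have hss : Real.sin (k*(l-δ)) = Real.sin (k*δ) := by
      rw [hklδ, Real.sin_pi_sub]
    simp only [hg, hcs, hss]
    field_simp
  -- Step 4 : conclude 0 ≤ A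
  have hψ : Tendsto (fun δ => g (l-δ) * (x (l-δ))^2 - g δ * (x δ)^2)
      (nhdsWithin 0 (Ioi 0)) (nhds 0) := by
    have := T2lim.sub T1lim
    simpa using this
  have hA0 : (0:ℝ) ≤ A := by
    apply le_of_tendsto_of_tendsto hψ step2
    exact Filter.eventually_of_mem hmem (fun δ hδ => step1 δ hδ)
  -- unfold A
  have hx2int : IntervalIntegrable (fun z => (x z)^2) MeasureTheory.volume 0 l :=
    ((hxc.pow 2).mono (uIcc_of_le (le_of_lt hl)).subset).intervalIntegrable
  have hx'2int : IntervalIntegrable (fun z => (x' z)^2) MeasureTheory.volume 0 l :=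
    ((hx'c.pow 2).mono (uIcc_of_le (le_of_lt hl)).subset).intervalIntegrable
  have hAeq : A = (∫ z in (0:ℝ)..l, (x' z)^2) - k^2 * ∫ z in (0:ℝ)..l, (x z)^2 := by
    rw [hA]
    simp only [hh]
    rw [integral_sub hx'2int (hx2int.const_mul _), integral_const_mul]
  linarith [hA0, hAeq.symm.le]

-- |∫ fg| ≤ ‖f‖‖g‖
lemma csabs (l : ℝ) (hl : 0 ≤ l) (f g : ℝ → ℝ) (hf : ContinuousOn f (Icc 0 l))
    (hg : ContinuousOn g (Icc 0 l)) :
    |∫ z in (0:ℝ)..l, f z * g z| ≤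
      Real.sqrt (∫ z in (0:ℝ)..l, (f z)^2) * Real.sqrt (∫ z in (0:ℝ)..l, (g z)^2) := by
  rcases abs_cases (∫ z in (0:ℝ)..l, f z * g z) with ⟨h, _⟩ | ⟨h, _⟩
  · rw [h]; exact csq l hl f g hf hg
  · rw [h]
    have := csq l hl (fun z => -f z) g (hf.neg) hg
    simp only [neg_mul, neg_sq] at this
    rw [intervalIntegral.integral_neg] at this
    simpa using this

end Aux


/-- `‖f‖_{L²}` on `[0,l]`. -/
noncomputable def L2norm (l : ℝ) (f : ℝ → ℝ) : ℝ :=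
  Real.sqrt (∫ z in (0:ℝ)..l, (f z)^2)

/-- Proposition 2, estimate for `U̇`:
`2∫₀ˡ x·(a²x'' + Φ(x) + B y + ξ₁) + 2y·(c²y + ∫₀ˡ D x + ξ₂)
  ≤ (−2π²a²/l² + ε)‖x‖²_{L²} + 2‖B+D‖_{L²}‖x‖_{L²}|y| + (2c² + ε)y² + ε⁻¹(‖ξ₁‖²_{L²} + ξ₂²)`. -/
theorem stmt5 (l a c : ℝ) (hl : 0 < l) (ha : 0 < a) (hc : 0 < c)
    (Φ : ℝ → ℝ) (hΦcont : Continuous Φ) (hΦ : ∀ s : ℝ, s * Φ s ≤ 0)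
    (B D : ℝ → ℝ) (hB : ContinuousOn B (Icc 0 l)) (hD : ContinuousOn D (Icc 0 l))
    (ε : ℝ) (hε : 0 < ε)
    (x x' x'' : ℝ → ℝ)
    (hx : ∀ z ∈ Icc (0:ℝ) l, HasDerivAt x (x' z) z)
    (hx' : ∀ z ∈ Icc (0:ℝ) l, HasDerivAt x' (x'' z) z)
    (hx''c : ContinuousOn x'' (Icc 0 l))
    (hx0 : x 0 = 0) (hxl : x l = 0)
    (y ξ₂ : ℝ) (ξ₁ : ℝ → ℝ) (hξ₁ : ContinuousOn ξ₁ (Icc 0 l)) :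
    2 * (∫ z in (0:ℝ)..l, x z * (a^2 * x'' z + Φ (x z) + B z * y + ξ₁ z)) +
      2 * y * (c^2 * y + (∫ z in (0:ℝ)..l, D z * x z) + ξ₂) ≤
    (-2 * π^2 * a^2 / l^2 + ε) * (L2norm l x)^2 +
      2 * L2norm l (fun z => B z + D z) * L2norm l x * |y| +
      (2 * c^2 + ε) * y^2 + ε⁻¹ * ((L2norm l ξ₁)^2 + ξ₂^2) := by
  have hl' : (0:ℝ) ≤ l := le_of_lt hl
  have huIcc : uIcc (0:ℝ) l = Icc 0 l := uIcc_of_le hl'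
  have hxc : ContinuousOn x (Icc 0 l) := fun z hz => (hx z hz).continuousAt.continuousWithinAt
  have hx'c : ContinuousOn x' (Icc 0 l) := fun z hz => (hx' z hz).continuousAt.continuousWithinAt
  -- integrability of all the pieces
  have int_of : ∀ f : ℝ → ℝ, ContinuousOn f (Icc 0 l) →
      IntervalIntegrable f MeasureTheory.volume 0 l := fun f hf =>
    (hf.mono huIcc.subset).intervalIntegrable
  have ix2 := int_of (fun z => (x z)^2) (hxc.pow 2)
  have ix'2 := int_of (fun z => (x' z)^2) (hx'c.pow 2)
  have ixx'' := int_of (fun z => x z * x'' z) (hxc.mul hx''c)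
  have ixΦ := int_of (fun z => x z * Φ (x z)) (hxc.mul (hΦcont.comp_continuousOn hxc))
  have iBx := int_of (fun z => B z * x z) (hB.mul hxc)
  have iDx := int_of (fun z => D z * x z) (hD.mul hxc)
  have ixξ := int_of (fun z => x z * ξ₁ z) (hxc.mul hξ₁)
  have iξ2 := int_of (fun z => (ξ₁ z)^2) (hξ₁.pow 2)
  -- split the main integral
  have esplit : (∫ z in (0:ℝ)..l, x z * (a^2 * x'' z + Φ (x z) + B z * y + ξ₁ z))
      = a^2 * (∫ z in (0:ℝ)..l, x z * x'' z) + (∫ z in (0:ℝ)..l, x z * Φ (x z))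
        + y * (∫ z in (0:ℝ)..l, B z * x z) + (∫ z in (0:ℝ)..l, x z * ξ₁ z) := by
    have e : ∀ z, x z * (a^2 * x'' z + Φ (x z) + B z * y + ξ₁ z)
        = a^2 * (x z * x'' z) + (x z * Φ (x z)) + y * (B z * x z) + (x z * ξ₁ z) := by
      intro z; ring
    simp_rw [e]
    rw [intervalIntegral.integral_add (((ixx''.const_mul _).add ixΦ).add (iBx.const_mul _)) ixξ,
      intervalIntegral.integral_add ((ixx''.const_mul _).add ixΦ) (iBx.const_mul _),
      intervalIntegral.integral_add (ixx''.const_mul _) ixΦ,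
      intervalIntegral.integral_const_mul, intervalIntegral.integral_const_mul]
  -- integration by parts : ∫ x x'' = -∫ x'^2
  have hibp : (∫ z in (0:ℝ)..l, x z * x'' z) = - ∫ z in (0:ℝ)..l, (x' z)^2 := by
    have hderiv : ∀ z ∈ uIcc (0:ℝ) l, HasDerivAt (fun u => x u * x' u)
        ((x' z)^2 + x z * x'' z) z := by
      intro z hz
      rw [huIcc] at hz
      have := (hx z hz).fun_mul (hx' z hz)
      refine this.congr_deriv ?_
      ring
    have hint : IntervalIntegrable (fun z => (x' z)^2 + x z * x'' z)
        MeasureTheory.volume 0 l := ix'2.add ixx''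
    have hftc := intervalIntegral.integral_eq_sub_of_hasDerivAt hderiv hint
    rw [hx0, hxl] at hftc
    rw [intervalIntegral.integral_add ix'2 ixx''] at hftc
    simp only [zero_mul, sub_zero] at hftc
    linarith
  -- Wirtinger
  have hwirt := wirtinger l hl x x' hx hx'c hx0 hxl
  -- nonpositivity of ∫ x Φ(x)
  have hΦint : (∫ z in (0:ℝ)..l, x z * Φ (x z)) ≤ 0 := by
    have : (0:ℝ) ≤ ∫ z in (0:ℝ)..l, -(x z * Φ (x z)) :=
      intervalIntegral.integral_nonneg hl' (fun u _ => by
        have := hΦ (x u); linarith)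
    rw [intervalIntegral.integral_neg] at this
    linarith
  -- combine B and D integrals
  have hBD : y * (∫ z in (0:ℝ)..l, B z * x z) + y * (∫ z in (0:ℝ)..l, D z * x z)
      = y * ∫ z in (0:ℝ)..l, (B z + D z) * x z := by
    rw [show (fun z => (B z + D z) * x z) = fun z => B z * x z + D z * x z by
      funext z; ring]
    rw [intervalIntegral.integral_add iBx iDx]
    ring
  -- Cauchy-Schwarz for (B+D) x
  have hcs := csabs l hl' (fun z => B z + D z) x (hB.add hD) hxc
  -- Young for ξ₁
  have hY1 : 2 * (∫ z in (0:ℝ)..l, x z * ξ₁ z)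
      ≤ ε * (∫ z in (0:ℝ)..l, (x z)^2) + ε⁻¹ * ∫ z in (0:ℝ)..l, (ξ₁ z)^2 := by
    have hεinv : ε * ε⁻¹ = 1 := mul_inv_cancel₀ (ne_of_gt hε)
    have h0 : (0:ℝ) ≤ ∫ z in (0:ℝ)..l,
        (ε * (x z)^2 + ε⁻¹ * (ξ₁ z)^2 - 2 * (x z * ξ₁ z)) := by
      apply intervalIntegral.integral_nonneg hl'
      intro u _
      nlinarith [sq_nonneg (ε * x u - ξ₁ u), hε, sq_nonneg (ξ₁ u)]
    rw [intervalIntegral.integral_sub ((ix2.const_mul _).add (iξ2.const_mul _))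
      (ixξ.const_mul _)] at h0
    rw [intervalIntegral.integral_add (ix2.const_mul _) (iξ2.const_mul _)] at h0
    rw [intervalIntegral.integral_const_mul, intervalIntegral.integral_const_mul,
      intervalIntegral.integral_const_mul] at h0
    linarith
  -- Young for ξ₂
  have hY2 : 2 * y * ξ₂ ≤ ε * y^2 + ε⁻¹ * ξ₂^2 := by
    have hεinv : ε * ε⁻¹ = 1 := mul_inv_cancel₀ (ne_of_gt hε)
    nlinarith [sq_nonneg (ε * y - ξ₂), hε, sq_nonneg ξ₂]
  -- L2 norms squared
  have hX2nn : (0:ℝ) ≤ ∫ z in (0:ℝ)..l, (x z)^2 :=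
    intervalIntegral.integral_nonneg hl' (fun u _ => sq_nonneg _)
  have hBD2nn : (0:ℝ) ≤ ∫ z in (0:ℝ)..l, (B z + D z)^2 :=
    intervalIntegral.integral_nonneg hl' (fun u _ => sq_nonneg _)
  have hξ2nn : (0:ℝ) ≤ ∫ z in (0:ℝ)..l, (ξ₁ z)^2 :=
    intervalIntegral.integral_nonneg hl' (fun u _ => sq_nonneg _)
  have hL2x : (L2norm l x)^2 = ∫ z in (0:ℝ)..l, (x z)^2 := Real.sq_sqrt hX2nn
  have hL2ξ : (L2norm l ξ₁)^2 = ∫ z in (0:ℝ)..l, (ξ₁ z)^2 := Real.sq_sqrt hξ2nn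
  have hL2xnn : 0 ≤ L2norm l x := Real.sqrt_nonneg _
  have hL2BDnn : 0 ≤ L2norm l (fun z => B z + D z) := Real.sqrt_nonneg _
  -- the BD cross term
  have hcross : 2 * (y * ∫ z in (0:ℝ)..l, (B z + D z) * x z)
      ≤ 2 * L2norm l (fun z => B z + D z) * L2norm l x * |y| := by
    have h1 : y * (∫ z in (0:ℝ)..l, (B z + D z) * x z)
        ≤ |y| * |∫ z in (0:ℝ)..l, (B z + D z) * x z| := by
      calc y * (∫ z in (0:ℝ)..l, (B z + D z) * x z)
          ≤ |y * ∫ z in (0:ℝ)..l, (B z + D z) * x z| := le_abs_self _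
        _ = |y| * |∫ z in (0:ℝ)..l, (B z + D z) * x z| := abs_mul _ _
    have h2 : |y| * |∫ z in (0:ℝ)..l, (B z + D z) * x z|
        ≤ |y| * (L2norm l (fun z => B z + D z) * L2norm l x) := by
      apply mul_le_mul_of_nonneg_left _ (abs_nonneg y)
      exact hcs
    linarith [h1, h2]
  -- Wirtinger term
  have hkk : (π/l)^2 = π^2/l^2 := by rw [div_pow]
  have hwt : 2 * a^2 * (∫ z in (0:ℝ)..l, x z * x'' z)
      ≤ -2 * π^2 * a^2 / l^2 * (∫ z in (0:ℝ)..l, (x z)^2) := by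
    rw [hibp]
    rw [hkk] at hwirt
    have ha2 : (0:ℝ) ≤ 2 * a^2 := by positivity
    have h := mul_le_mul_of_nonneg_left hwirt ha2
    have heq : -2 * π^2 * a^2 / l^2 * (∫ z in (0:ℝ)..l, (x z)^2)
        = -(2 * a^2 * (π^2/l^2 * ∫ z in (0:ℝ)..l, (x z)^2)) := by ring
    rw [heq]
    linarith [h]
  -- put everything together
  rw [esplit, hL2x, hL2ξ]
  linarith [hwt, hΦint, hBD, hcross, hY1, hY2]
end

section
/- For every ε > 0, every twice continuously differentiable x : [0,l] → ℝ with x(0) = x(l) = 0, every y, ξ₂ ∈ ℝ, and every continuously differentiable ξ₁ : [0,l] → ℝ with ξ₁(0) = ξ₁(l) = 0, the following estimate holds: −2∫₀ˡ x''(z)·(a² x''(z) + Φ(x(z)) + B(z)·y + ξ₁(z)) dz + 2y·(c² y + ∫₀ˡ D(z) x(z) dz + ξ₂) ≤ (−2π²a²/l² + ε)·‖x'‖²_{L²} + 2·(‖B'‖_{L²} + (l/π)·‖D‖_{L²})·‖x'‖_{L²}·|y| + (2c² + ε)·y² + ε⁻¹·(‖ξ₁'‖²_{L²} + ξ₂²).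 -/
open Set Real

open MeasureTheory intervalIntegral

lemma my_young {ε : ℝ} (hε : 0 < ε) (u v : ℝ) : 2*u*v ≤ ε*u^2 + ε⁻¹*v^2 := by
  have key : ε*u^2 + ε⁻¹*v^2 - 2*u*v = (ε*u - v)^2 / ε := by
    field_simp; ring
  nlinarith [div_nonneg (sq_nonneg (ε*u - v)) hε.le]

lemma my_cs {l : ℝ} (hl : 0 ≤ l) {f g : ℝ → ℝ} (hf : ContinuousOn f (Icc 0 l))
    (hg : ContinuousOn g (Icc 0 l)) :
    |∫ z in (0:ℝ)..l, f z * g z| ≤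
      Real.sqrt (∫ z in (0:ℝ)..l, (f z)^2) * Real.sqrt (∫ z in (0:ℝ)..l, (g z)^2) := by
  have huIcc : uIcc (0:ℝ) l = Icc 0 l := uIcc_of_le hl
  have hif : IntervalIntegrable (fun z => (f z)^2) volume 0 l := by
    apply ContinuousOn.intervalIntegrable; rw [huIcc]; exact hf.pow 2
  have hig : IntervalIntegrable (fun z => (g z)^2) volume 0 l := by
    apply ContinuousOn.intervalIntegrable; rw [huIcc]; exact hg.pow 2
  have hifg : IntervalIntegrable (fun z => f z * g z) volume 0 l := by
    apply ContinuousOn.intervalIntegrable; rw [huIcc]; exact hf.mul hg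
  set A := ∫ z in (0:ℝ)..l, (f z)^2 with hA
  set C := ∫ z in (0:ℝ)..l, (g z)^2 with hC
  set Bv := ∫ z in (0:ℝ)..l, f z * g z with hB
  have hA0 : 0 ≤ A := intervalIntegral.integral_nonneg hl (fun u _ => sq_nonneg _)
  have hC0 : 0 ≤ C := intervalIntegral.integral_nonneg hl (fun u _ => sq_nonneg _)
  have key : ∀ t : ℝ, 0 ≤ A * (t*t) + (2*Bv) * t + C := by
    intro t
    have hexp : ∀ z : ℝ, (t * f z + g z)^2
        = (t*t) * (f z)^2 + (2*t) * (f z * g z) + (g z)^2 := fun z => by ring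
    have : (∫ z in (0:ℝ)..l, (t * f z + g z)^2) = A * (t*t) + (2*Bv) * t + C := by
      simp only [hexp]
      rw [intervalIntegral.integral_add (by exact (hif.const_mul _).add (hifg.const_mul _))
        hig, intervalIntegral.integral_add (hif.const_mul _) (hifg.const_mul _),
        intervalIntegral.integral_const_mul, intervalIntegral.integral_const_mul]
      ring
    rw [← this]
    exact intervalIntegral.integral_nonneg hl (fun u _ => sq_nonneg _)
  have hd := discrim_le_zero key
  rw [discrim] at hd
  have hBsq : Bv^2 ≤ A * C := by nlinarith
  calc |Bv| = Real.sqrt (Bv^2) := (Real.sqrt_sq_eq_abs Bv).symm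
    _ ≤ Real.sqrt (A * C) := Real.sqrt_le_sqrt hBsq
    _ = Real.sqrt A * Real.sqrt C := Real.sqrt_mul hA0 _

set_option maxHeartbeats 1000000 in
lemma my_wirtinger {l : ℝ} (hl : 0 < l) {x x' : ℝ → ℝ}
    (hx : ∀ z ∈ Icc (0:ℝ) l, HasDerivAt x (x' z) z)
    (hx'c : ContinuousOn x' (Icc 0 l))
    (hx0 : x 0 = 0) (hxl : x l = 0) :
    (π/l)^2 * ∫ z in (0:ℝ)..l, (x z)^2 ≤ ∫ z in (0:ℝ)..l, (x' z)^2 := by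
  have hπ := Real.pi_pos
  obtain ⟨k, hk, hkl⟩ : ∃ k : ℝ, 0 < k ∧ k * l = π :=
    ⟨π / l, div_pos hπ hl, div_mul_cancel₀ π hl.ne'⟩
  have hkpi : (π/l)^2 = k^2 := by
    rw [← hkl]; field_simp
  have hxc : ContinuousOn x (Icc 0 l) := fun z hz =>
    (hx z hz).continuousAt.continuousWithinAt
  obtain ⟨M, hM, hM'⟩ : ∃ M : ℝ, 0 ≤ M ∧ ∀ z ∈ Icc (0:ℝ) l, |x' z| ≤ M := by
    obtain ⟨M0, hM0⟩ := isCompact_Icc.exists_bound_of_continuousOn hx'c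
    refine ⟨max M0 0, le_max_right _ _, fun z hz => ?_⟩
    have h := hM0 z hz
    rw [Real.norm_eq_abs] at h
    exact h.trans (le_max_left _ _)
  have hxb : ∀ z ∈ Icc (0:ℝ) l, |x z| ≤ M * z := by
    intro z hz
    have := (convex_Icc (0:ℝ) l).norm_image_sub_le_of_norm_hasDerivWithin_le
      (fun w hw => (hx w hw).hasDerivWithinAt) (fun w hw => by simpa using hM' w hw)
      (left_mem_Icc.mpr hl.le) hz
    simpa [hx0, Real.norm_eq_abs, abs_of_nonneg hz.1] using this
  have hxb2 : ∀ z ∈ Icc (0:ℝ) l, |x z| ≤ M * (l - z) := by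
    intro z hz
    have := (convex_Icc (0:ℝ) l).norm_image_sub_le_of_norm_hasDerivWithin_le
      (fun w hw => (hx w hw).hasDerivWithinAt) (fun w hw => by simpa using hM' w hw)
      (right_mem_Icc.mpr hl.le) hz
    have h2 : |z - l| = l - z := by rw [abs_sub_comm]; exact abs_of_nonneg (by linarith [hz.2])
    simpa [hxl, Real.norm_eq_abs, h2] using this
  obtain ⟨K, hKdef⟩ : ∃ K : ℝ, K = (M*l)^2 := ⟨_, rfl⟩
  have hK0 : 0 ≤ K := hKdef ▸ sq_nonneg _
  have hx2b : ∀ z ∈ Icc (0:ℝ) l, (x z)^2 ≤ K := by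
    intro z hz
    have h1 : |x z| ≤ M * l :=
      (hxb z hz).trans (mul_le_mul_of_nonneg_left hz.2 hM)
    rw [hKdef]
    calc (x z)^2 = |x z|^2 := (sq_abs _).symm
      _ ≤ (M*l)^2 := pow_le_pow_left₀ (abs_nonneg _) h1 2
  have hx2i : IntervalIntegrable (fun z => (x z)^2) volume 0 l := by
    apply ContinuousOn.intervalIntegrable; rw [uIcc_of_le hl.le]; exact hxc.pow 2
  have hx'2i : IntervalIntegrable (fun z => (x' z)^2) volume 0 l := by
    apply ContinuousOn.intervalIntegrable; rw [uIcc_of_le hl.le]; exact hx'c.pow 2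
  -- main estimate for each small δ
  have main : ∀ δ : ℝ, 0 < δ → δ < l/2 →
      k^2 * (∫ z in (0:ℝ)..l, (x z)^2)
        ≤ (∫ z in (0:ℝ)..l, (x' z)^2) + (2*M^2 + 2*k^2*K) * δ := by
    intro δ hδ0 hδl2
    have hδl : δ ≤ l - δ := by linarith
    have hsub : Icc δ (l-δ) ⊆ Icc 0 l := Icc_subset_Icc (by linarith) (by linarith)
    set ct : ℝ → ℝ := fun z => Real.cos (k*z) / Real.sin (k*z) with hctdef
    set G : ℝ → ℝ := fun z => k * (x z)^2 * ct z with hGdef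
    set g : ℝ → ℝ := fun z =>
      2*k*(x z)*(x' z)*ct z - k^2*(x z)^2*(1 + (ct z)^2) with hgdef
    have hsin : ∀ z ∈ Icc δ (l-δ), 0 < Real.sin (k*z) := by
      intro z hz
      have h1 : 0 < k * z := mul_pos hk (lt_of_lt_of_le hδ0 hz.1)
      have h3 : 0 < k * (l - z) := mul_pos hk (by linarith [hz.2])
      have h2 : k * z < π := by nlinarith [hkl]
      exact Real.sin_pos_of_pos_of_lt_pi h1 h2
    have hctc : ContinuousOn ct (Icc δ (l-δ)) := by
      apply ContinuousOn.div
      · exact (Real.continuous_cos.comp (continuous_const.mul continuous_id)).continuousOn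
      · exact (Real.continuous_sin.comp (continuous_const.mul continuous_id)).continuousOn
      · exact fun z hz => (hsin z hz).ne'
    have hG : ∀ z ∈ Icc δ (l-δ), HasDerivAt G (g z) z := by
      intro z hz
      have hz' := hsub hz
      have hs := (hsin z hz).ne'
      have h1 : HasDerivAt (fun w : ℝ => k*w) k z := by
        simpa using (hasDerivAt_id z).const_mul k
      have hct : HasDerivAt ct
          ((-Real.sin (k*z)*k*Real.sin (k*z) - Real.cos (k*z)*(Real.cos (k*z)*k))
            / (Real.sin (k*z))^2) z := h1.cos.div h1.sin hs
      have hx2 : HasDerivAt (fun w => k*(x w)^2) (k*(2*x z*x' z)) z := by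
        have h2 : HasDerivAt (fun w => (x w)^2) (2 * x z * x' z) z := by
          have := (hx z hz').pow 2; simp at this; exact this
        simpa using h2.const_mul k
      have h3 := hx2.mul hct
      have hpyth : Real.sin (k*z)^2 + Real.cos (k*z)^2 = 1 := Real.sin_sq_add_cos_sq _
      have hctsq : 1 + (ct z)^2 = 1 / (Real.sin (k*z))^2 := by
        simp only [hctdef]
        rw [div_pow, ← hpyth]
        field_simp
        linear_combination (Real.sin (k*z))^2 * hpyth
      have hD : k * (2 * x z * x' z) * ct z + k * (x z)^2 *
          ((-Real.sin (k*z)*k*Real.sin (k*z) - Real.cos (k*z)*(Real.cos (k*z)*k))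
            / (Real.sin (k*z))^2) = g z := by
        have hnum : (-Real.sin (k*z)*k*Real.sin (k*z) - Real.cos (k*z)*(Real.cos (k*z)*k))
            = -k * ((Real.sin (k*z))^2 + (Real.cos (k*z))^2) := by ring
        simp only [hgdef, hnum, hpyth]
        rw [hctsq]
        field_simp
        ring
      exact hD ▸ h3
    have hgle : ∀ z ∈ Icc δ (l-δ), g z + k^2*(x z)^2 ≤ (x' z)^2 := by
      intro z hz
      simp only [hgdef]
      nlinarith [sq_nonneg (x' z - k * x z * ct z)]
    have hxcδ : ContinuousOn x (Icc δ (l-δ)) := hxc.mono hsub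
    have hx'cδ : ContinuousOn x' (Icc δ (l-δ)) := hx'c.mono hsub
    have hgi : IntervalIntegrable g volume δ (l-δ) := by
      apply ContinuousOn.intervalIntegrable; rw [uIcc_of_le hδl]
      apply ContinuousOn.sub
      · exact ((((continuousOn_const.mul hxcδ).mul hx'cδ)).mul hctc)
      · exact (continuousOn_const.mul (hxcδ.pow 2)).mul
          (continuousOn_const.add (hctc.pow 2))
    have hx2iδ : IntervalIntegrable (fun z => (x z)^2) volume δ (l-δ) := by
      apply ContinuousOn.intervalIntegrable; rw [uIcc_of_le hδl]; exact hxcδ.pow 2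
    have hx'2iδ : IntervalIntegrable (fun z => (x' z)^2) volume δ (l-δ) := by
      apply ContinuousOn.intervalIntegrable; rw [uIcc_of_le hδl]; exact hx'cδ.pow 2
    have hFTC : (∫ z in δ..(l-δ), g z) = G (l-δ) - G δ := by
      apply intervalIntegral.integral_eq_sub_of_hasDerivAt
      · intro z hz; exact hG z (by rwa [uIcc_of_le hδl] at hz)
      · exact hgi
    have hmono : (∫ z in δ..(l-δ), (g z + k^2*(x z)^2))
        ≤ ∫ z in δ..(l-δ), (x' z)^2 := by
      apply intervalIntegral.integral_mono_on hδl (hgi.add (hx2iδ.const_mul _)) hx'2iδ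
      exact hgle
    rw [intervalIntegral.integral_add hgi (hx2iδ.const_mul _),
      intervalIntegral.integral_const_mul, hFTC] at hmono
    -- boundary bounds
    have hkδ1 : 0 < k*δ := by positivity
    have hkδ2 : k*δ < π/2 := by nlinarith [hkl]
    have hcosδ : 0 < Real.cos (k*δ) := Real.cos_pos_of_mem_Ioo ⟨by linarith, hkδ2⟩
    have hsinδ : 0 < Real.sin (k*δ) := Real.sin_pos_of_pos_of_lt_pi hkδ1 (by linarith)
    have htan : k*δ < Real.tan (k*δ) := Real.lt_tan hkδ1 hkδ2
    have hq0 : 0 ≤ Real.cos (k*δ) / Real.sin (k*δ) := by positivity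
    have hqub : Real.cos (k*δ) / Real.sin (k*δ) ≤ 1/(k*δ) := by
      rw [Real.tan_eq_sin_div_cos, lt_div_iff₀ hcosδ] at htan
      rw [div_le_div_iff₀ hsinδ hkδ1]
      nlinarith
    have hδmem : δ ∈ Icc (0:ℝ) l := ⟨hδ0.le, by linarith⟩
    have hlδmem : (l-δ) ∈ Icc (0:ℝ) l := ⟨by linarith, by linarith⟩
    have hxδ : (x δ)^2 ≤ (M*δ)^2 := by
      have h := hxb δ hδmem
      calc (x δ)^2 = |x δ|^2 := (sq_abs _).symm
        _ ≤ (M*δ)^2 := pow_le_pow_left₀ (abs_nonneg _) h 2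
    have hxlδ : (x (l-δ))^2 ≤ (M*δ)^2 := by
      have h := hxb2 (l-δ) hlδmem
      rw [show l - (l-δ) = δ from by ring] at h
      calc (x (l-δ))^2 = |x (l-δ)|^2 := (sq_abs _).symm
        _ ≤ (M*δ)^2 := pow_le_pow_left₀ (abs_nonneg _) h 2
    have hident : (k*(M*δ)^2) * (1/(k*δ)) = M^2*δ := by field_simp
    have hGδ : G δ ≤ M^2*δ := by
      have h1 : G δ = k * (x δ)^2 * (Real.cos (k*δ) / Real.sin (k*δ)) := rfl
      rw [h1]
      calc k * (x δ)^2 * (Real.cos (k*δ) / Real.sin (k*δ))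
          ≤ k * (M*δ)^2 * (Real.cos (k*δ) / Real.sin (k*δ)) :=
            mul_le_mul_of_nonneg_right (mul_le_mul_of_nonneg_left hxδ hk.le) hq0
        _ ≤ (k*(M*δ)^2) * (1/(k*δ)) :=
            mul_le_mul_of_nonneg_left hqub (by positivity)
        _ = M^2*δ := hident
    have hGlδ : -(M^2*δ) ≤ G (l-δ) := by
      have hct : ct (l-δ) = -(Real.cos (k*δ) / Real.sin (k*δ)) := by
        have h2 : k * (l-δ) = π - k*δ := by rw [mul_sub, hkl]
        simp only [hctdef, h2, Real.cos_pi_sub, Real.sin_pi_sub, neg_div]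
      have h1 : G (l-δ) = k * (x (l-δ))^2 * ct (l-δ) := rfl
      rw [h1, hct]
      have step1 : k * (x (l-δ))^2 * (Real.cos (k*δ) / Real.sin (k*δ)) ≤ M^2*δ := by
        calc k * (x (l-δ))^2 * (Real.cos (k*δ) / Real.sin (k*δ))
            ≤ k * (M*δ)^2 * (Real.cos (k*δ) / Real.sin (k*δ)) :=
              mul_le_mul_of_nonneg_right (mul_le_mul_of_nonneg_left hxlδ hk.le) hq0
          _ ≤ (k*(M*δ)^2) * (1/(k*δ)) := mul_le_mul_of_nonneg_left hqub (by positivity)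
          _ = M^2*δ := hident
      linarith
    -- splitting the big integrals
    have h0δ : (0:ℝ) ≤ δ := hδ0.le
    have hx2i1 : IntervalIntegrable (fun z => (x z)^2) volume 0 δ :=
      hx2i.mono_set (by rw [uIcc_of_le h0δ, uIcc_of_le hl.le]; exact Icc_subset_Icc le_rfl (by linarith))
    have hx2i3 : IntervalIntegrable (fun z => (x z)^2) volume (l-δ) l :=
      hx2i.mono_set (by rw [uIcc_of_le (by linarith : l-δ ≤ l), uIcc_of_le hl.le]; exact Icc_subset_Icc (by linarith) le_rfl)
    have hsplit : (∫ z in (0:ℝ)..δ, (x z)^2) + (∫ z in δ..(l-δ), (x z)^2)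
        + (∫ z in (l-δ)..l, (x z)^2) = ∫ z in (0:ℝ)..l, (x z)^2 := by
      rw [intervalIntegral.integral_add_adjacent_intervals hx2i1 hx2iδ]
      exact intervalIntegral.integral_add_adjacent_intervals
        (hx2i1.trans hx2iδ) hx2i3
    have hb1 : (∫ z in (0:ℝ)..δ, (x z)^2) ≤ K*δ := by
      have h := intervalIntegral.norm_integral_le_of_norm_le_const (C := K)
        (f := fun z => (x z)^2) (a := 0) (b := δ) ?_
      · rw [Real.norm_eq_abs] at h
        have := le_abs_self (∫ z in (0:ℝ)..δ, (x z)^2)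
        have habs : |δ - 0| = δ := by rw [sub_zero]; exact abs_of_nonneg h0δ
        rw [habs] at h; linarith
      · intro z hz
        rw [uIoc_of_le h0δ] at hz
        have : z ∈ Icc (0:ℝ) l := ⟨hz.1.le, by linarith [hz.2]⟩
        rw [Real.norm_eq_abs, abs_of_nonneg (sq_nonneg _)]
        exact hx2b z this
    have hb3 : (∫ z in (l-δ)..l, (x z)^2) ≤ K*δ := by
      have h := intervalIntegral.norm_integral_le_of_norm_le_const (C := K)
        (f := fun z => (x z)^2) (a := l-δ) (b := l) ?_
      · rw [Real.norm_eq_abs] at h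
        have := le_abs_self (∫ z in (l-δ)..l, (x z)^2)
        have habs : |l - (l-δ)| = δ := by rw [show l - (l-δ) = δ by ring]; exact abs_of_nonneg h0δ
        rw [habs] at h; linarith
      · intro z hz
        rw [uIoc_of_le (by linarith : l-δ ≤ l)] at hz
        have : z ∈ Icc (0:ℝ) l := ⟨by linarith [hz.1], hz.2⟩
        rw [Real.norm_eq_abs, abs_of_nonneg (sq_nonneg _)]
        exact hx2b z this
    have hmid : (∫ z in (0:ℝ)..l, (x z)^2) ≤ (∫ z in δ..(l-δ), (x z)^2) + 2*K*δ := by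
      linarith
    have hx'mono : (∫ z in δ..(l-δ), (x' z)^2) ≤ ∫ z in (0:ℝ)..l, (x' z)^2 := by
      apply intervalIntegral.integral_mono_interval (by linarith) hδl (by linarith)
      · exact ae_of_all _ (fun z => sq_nonneg _)
      · exact hx'2i
    have hk2 : (0:ℝ) ≤ k^2 := sq_nonneg k
    have hscaled : k^2 * (∫ z in (0:ℝ)..l, (x z)^2)
        ≤ k^2 * ((∫ z in δ..(l-δ), (x z)^2) + 2*K*δ) :=
      mul_le_mul_of_nonneg_left hmid hk2
    linarith [hscaled, hmono, hx'mono, hGδ, hGlδ]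
  -- conclude
  rw [hkpi]
  refine le_of_forall_pos_le_add (fun η hη => ?_)
  set C := 2*M^2 + 2*k^2*K with hCdef
  have hC0 : 0 ≤ C := by positivity
  set δ := min (l/4) (η/(C+1)) with hδdef
  have hδ0 : 0 < δ := lt_min (by linarith) (div_pos hη (by linarith))
  have hδl2 : δ < l/2 := lt_of_le_of_lt (min_le_left _ _) (by linarith)
  have h := main δ hδ0 hδl2
  have hCδ : C * δ ≤ η := by
    calc C * δ ≤ C * (η/(C+1)) := mul_le_mul_of_nonneg_left (min_le_right _ _) hC0
      _ ≤ (C+1) * (η/(C+1)) := mul_le_mul_of_nonneg_right (by linarith)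
          (div_nonneg hη.le (by linarith))
      _ = η := mul_div_cancel₀ η (by linarith)
  linarith

lemma my_wirtinger_norm {l : ℝ} (hl : 0 < l) {x x' : ℝ → ℝ}
    (hx : ∀ z ∈ Icc (0:ℝ) l, HasDerivAt x (x' z) z)
    (hx'c : ContinuousOn x' (Icc 0 l))
    (hx0 : x 0 = 0) (hxl : x l = 0) :
    Real.sqrt (∫ z in (0:ℝ)..l, (x z)^2)
      ≤ (l/π) * Real.sqrt (∫ z in (0:ℝ)..l, (x' z)^2) := by
  have hπ := Real.pi_pos
  have h := my_wirtinger hl hx hx'c hx0 hxl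
  have hfact : (l/π)^2 * (π/l)^2 = 1 := by field_simp
  have hQP : (∫ z in (0:ℝ)..l, (x z)^2) ≤ (l/π)^2 * ∫ z in (0:ℝ)..l, (x' z)^2 := by
    calc (∫ z in (0:ℝ)..l, (x z)^2)
        = (l/π)^2 * ((π/l)^2 * ∫ z in (0:ℝ)..l, (x z)^2) := by
          rw [← mul_assoc, hfact, one_mul]
      _ ≤ (l/π)^2 * ∫ z in (0:ℝ)..l, (x' z)^2 :=
          mul_le_mul_of_nonneg_left h (sq_nonneg _)
  calc Real.sqrt (∫ z in (0:ℝ)..l, (x z)^2)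
      ≤ Real.sqrt ((l/π)^2 * ∫ z in (0:ℝ)..l, (x' z)^2) := Real.sqrt_le_sqrt hQP
    _ = (l/π) * Real.sqrt (∫ z in (0:ℝ)..l, (x' z)^2) := by
        rw [Real.sqrt_mul (sq_nonneg _), Real.sqrt_sq (by positivity : (0:ℝ) ≤ l/π)]

set_option maxHeartbeats 2000000 in
/-- estimate for `V̇` in the proof of Proposition 3:
`−2∫₀ˡ x''·(a²x'' + Φ(x) + B y + ξ₁) + 2y·(c²y + ∫₀ˡ D x + ξ₂)
  ≤ (−2π²a²/l² + ε)‖x'‖²_{L²} + 2(‖B'‖_{L²} + (l/π)‖D‖_{L²})‖x'‖_{L²}|y|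
    + (2c² + ε)y² + ε⁻¹(‖ξ₁'‖²_{L²} + ξ₂²)`. -/
theorem stmt7 (l a c : ℝ) (hl : 0 < l) (ha : 0 < a) (hc : 0 < c)
    (Φ Φ' : ℝ → ℝ) (hΦd : ∀ s, HasDerivAt Φ (Φ' s) s) (hΦ'c : Continuous Φ')
    (hΦ'le : ∀ s : ℝ, Φ' s ≤ 0) (hΦ : ∀ s : ℝ, s * Φ s ≤ 0)
    (D : ℝ → ℝ) (hD : ContinuousOn D (Icc 0 l))
    (B B' : ℝ → ℝ) (hB : ∀ z ∈ Icc (0:ℝ) l, HasDerivAt B (B' z) z)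
    (hB'c : ContinuousOn B' (Icc 0 l)) (hB0 : B 0 = 0) (hBl : B l = 0)
    (ε : ℝ) (hε : 0 < ε)
    (x x' x'' : ℝ → ℝ)
    (hx : ∀ z ∈ Icc (0:ℝ) l, HasDerivAt x (x' z) z)
    (hx' : ∀ z ∈ Icc (0:ℝ) l, HasDerivAt x' (x'' z) z)
    (hx''c : ContinuousOn x'' (Icc 0 l))
    (hx0 : x 0 = 0) (hxl : x l = 0)
    (y ξ₂ : ℝ)
    (ξ₁ ξ₁' : ℝ → ℝ) (hξ₁ : ∀ z ∈ Icc (0:ℝ) l, HasDerivAt ξ₁ (ξ₁' z) z)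
    (hξ₁'c : ContinuousOn ξ₁' (Icc 0 l)) (hξ₁0 : ξ₁ 0 = 0) (hξ₁l : ξ₁ l = 0) :
    -2 * (∫ z in (0:ℝ)..l, x'' z * (a^2 * x'' z + Φ (x z) + B z * y + ξ₁ z)) +
      2 * y * (c^2 * y + (∫ z in (0:ℝ)..l, D z * x z) + ξ₂) ≤
    (-2 * π^2 * a^2 / l^2 + ε) * (L2norm l x')^2 +
      2 * (L2norm l B' + (l / π) * L2norm l D) * L2norm l x' * |y| +
      (2 * c^2 + ε) * y^2 + ε⁻¹ * ((L2norm l ξ₁')^2 + ξ₂^2) := by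
  have hπ := Real.pi_pos
  have hll : (0:ℝ) ≤ l := hl.le
  have huIcc : uIcc (0:ℝ) l = Icc 0 l := uIcc_of_le hll
  have int : ∀ {f : ℝ → ℝ}, ContinuousOn f (Icc 0 l) →
      IntervalIntegrable f volume 0 l :=
    fun {f} hf => (hf.mono huIcc.subset).intervalIntegrable
  -- continuity facts
  have hxc : ContinuousOn x (Icc 0 l) := fun z hz => (hx z hz).continuousAt.continuousWithinAt
  have hx'cc : ContinuousOn x' (Icc 0 l) := fun z hz => (hx' z hz).continuousAt.continuousWithinAt
  have hBc : ContinuousOn B (Icc 0 l) := fun z hz => (hB z hz).continuousAt.continuousWithinAt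
  have hξc : ContinuousOn ξ₁ (Icc 0 l) := fun z hz => (hξ₁ z hz).continuousAt.continuousWithinAt
  have hΦc : Continuous Φ := continuous_iff_continuousAt.mpr (fun s => (hΦd s).continuousAt)
  have hΦxc : ContinuousOn (fun z => Φ (x z)) (Icc 0 l) := hΦc.comp_continuousOn hxc
  have hΦ'xc : ContinuousOn (fun z => Φ' (x z)) (Icc 0 l) := hΦ'c.comp_continuousOn hxc
  -- Φ 0 = 0
  have hΦ0 : Φ 0 = 0 := by
    have hca : ContinuousAt Φ 0 := (hΦd 0).continuousAt
    have h1 : Φ 0 ≤ 0 := by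
      have ht : Filter.Tendsto Φ (nhdsWithin 0 (Ioi 0)) (nhds (Φ 0)) := hca.continuousWithinAt
      refine le_of_tendsto ht ?_
      filter_upwards [self_mem_nhdsWithin] with s hs
      have h2 := hΦ s
      have h3 : (0:ℝ) < s := hs
      nlinarith
    have h4 : 0 ≤ Φ 0 := by
      have ht : Filter.Tendsto Φ (nhdsWithin 0 (Iio 0)) (nhds (Φ 0)) := hca.continuousWithinAt
      refine ge_of_tendsto ht ?_
      filter_upwards [self_mem_nhdsWithin] with s hs
      have h2 := hΦ s
      have h3 : s < (0:ℝ) := hs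
      nlinarith
    linarith
  -- decompose the integral
  set R := ∫ z in (0:ℝ)..l, (x'' z)^2 with hRdef
  have iA : IntervalIntegrable (fun z => a^2*(x'' z)^2) volume 0 l :=
    (int (hx''c.pow 2)).const_mul _
  have iB : IntervalIntegrable (fun z => Φ (x z) * x'' z) volume 0 l := int (hΦxc.mul hx''c)
  have iC : IntervalIntegrable (fun z => (B z * x'' z)*y) volume 0 l :=
    (int (hBc.mul hx''c)).mul_const _
  have iD : IntervalIntegrable (fun z => ξ₁ z * x'' z) volume 0 l := int (hξc.mul hx''c)
  have hJ : (∫ z in (0:ℝ)..l, x'' z * (a^2 * x'' z + Φ (x z) + B z * y + ξ₁ z))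
      = a^2*R + (∫ z in (0:ℝ)..l, Φ (x z) * x'' z)
        + (∫ z in (0:ℝ)..l, B z * x'' z)*y + (∫ z in (0:ℝ)..l, ξ₁ z * x'' z) := by
    have hpt : ∀ z : ℝ, x'' z * (a^2 * x'' z + Φ (x z) + B z * y + ξ₁ z)
        = a^2*(x'' z)^2 + (Φ (x z) * x'' z + ((B z * x'' z)*y + ξ₁ z * x'' z)) :=
      fun z => by ring
    simp only [hpt]
    rw [intervalIntegral.integral_add iA (iB.add (iC.add iD)),
      intervalIntegral.integral_add iB (iC.add iD),
      intervalIntegral.integral_add iC iD,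
      intervalIntegral.integral_const_mul, intervalIntegral.integral_mul_const]
    ring
  -- integration by parts
  have hIBP_B : (∫ z in (0:ℝ)..l, B z * x'' z) = -(∫ z in (0:ℝ)..l, B' z * x' z) := by
    have h := intervalIntegral.integral_mul_deriv_eq_deriv_mul
      (u := B) (v := x') (u' := B') (v' := x'')
      (fun z hz => hB z (by rwa [huIcc] at hz)) (fun z hz => hx' z (by rwa [huIcc] at hz))
      (int hB'c) (int hx''c)
    rw [hB0, hBl] at h
    simpa using h
  have hIBP_ξ : (∫ z in (0:ℝ)..l, ξ₁ z * x'' z) = -(∫ z in (0:ℝ)..l, ξ₁' z * x' z) := by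
    have h := intervalIntegral.integral_mul_deriv_eq_deriv_mul
      (u := ξ₁) (v := x') (u' := ξ₁') (v' := x'')
      (fun z hz => hξ₁ z (by rwa [huIcc] at hz)) (fun z hz => hx' z (by rwa [huIcc] at hz))
      (int hξ₁'c) (int hx''c)
    rw [hξ₁0, hξ₁l] at h
    simpa using h
  have hIBP_Φ : (∫ z in (0:ℝ)..l, Φ (x z) * x'' z)
      = -(∫ z in (0:ℝ)..l, Φ' (x z) * x' z * x' z) := by
    have h := intervalIntegral.integral_mul_deriv_eq_deriv_mul
      (u := fun w => Φ (x w)) (v := x') (u' := fun w => Φ' (x w) * x' w) (v' := x'')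
      (fun z hz => by
        have := (hΦd (x z)).comp z (hx z (by rwa [huIcc] at hz))
        exact this)
      (fun z hz => hx' z (by rwa [huIcc] at hz))
      (int (hΦ'xc.mul hx'cc)) (int hx''c)
    simp only [hx0, hxl, hΦ0, zero_mul, mul_zero, sub_zero, zero_sub] at h
    exact h
  have hIBP_x : (∫ z in (0:ℝ)..l, x z * x'' z) = -(∫ z in (0:ℝ)..l, (x' z)^2) := by
    have h := intervalIntegral.integral_mul_deriv_eq_deriv_mul
      (u := x) (v := x') (u' := x') (v' := x'')
      (fun z hz => hx z (by rwa [huIcc] at hz)) (fun z hz => hx' z (by rwa [huIcc] at hz))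
      (int hx'cc) (int hx''c)
    rw [hx0, hxl] at h
    simp only [mul_zero, zero_mul, sub_zero, zero_sub] at h
    rw [h]
    congr 1
    apply intervalIntegral.integral_congr
    intro z _
    ring
  -- shorthand norms
  simp only [L2norm]
  set Nx' := Real.sqrt (∫ z in (0:ℝ)..l, (x' z)^2) with hNx'def
  set Nx'' := Real.sqrt (∫ z in (0:ℝ)..l, (x'' z)^2) with hNx''def
  set NB := Real.sqrt (∫ z in (0:ℝ)..l, (B' z)^2) with hNBdef
  set ND := Real.sqrt (∫ z in (0:ℝ)..l, (D z)^2) with hNDdef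
  set Nξ := Real.sqrt (∫ z in (0:ℝ)..l, (ξ₁' z)^2) with hNξdef
  set Nx := Real.sqrt (∫ z in (0:ℝ)..l, (x z)^2) with hNxdef
  clear_value R Nx' Nx'' NB ND Nξ Nx
  have hNx'0 : 0 ≤ Nx' := by rw [hNx'def]; exact Real.sqrt_nonneg _
  have hNx''0 : 0 ≤ Nx'' := by rw [hNx''def]; exact Real.sqrt_nonneg _
  have hNB0 : 0 ≤ NB := by rw [hNBdef]; exact Real.sqrt_nonneg _
  have hND0 : 0 ≤ ND := by rw [hNDdef]; exact Real.sqrt_nonneg _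
  have hNξ0 : 0 ≤ Nξ := by rw [hNξdef]; exact Real.sqrt_nonneg _
  have hNx0 : 0 ≤ Nx := by rw [hNxdef]; exact Real.sqrt_nonneg _
  have hNx'sq : Nx'^2 = ∫ z in (0:ℝ)..l, (x' z)^2 := by
    rw [hNx'def]
    exact Real.sq_sqrt (intervalIntegral.integral_nonneg hll (fun u _ => sq_nonneg _))
  have hNx''sq : Nx''^2 = R := by
    rw [hNx''def, hRdef]
    exact Real.sq_sqrt (intervalIntegral.integral_nonneg hll (fun u _ => sq_nonneg _))
  -- Wirtinger facts
  have hWx : Nx ≤ (l/π) * Nx' := by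
    rw [hNxdef, hNx'def]
    exact my_wirtinger_norm hl hx hx'cc hx0 hxl
  -- ‖x'‖ ≤ (l/π) ‖x''‖
  have hP : Nx'^2 ≤ Nx * Nx'' := by
    have hcs := my_cs hll hxc hx''c
    rw [← hNxdef, ← hNx''def, hIBP_x, abs_neg] at hcs
    have h2 : (∫ z in (0:ℝ)..l, (x' z)^2) ≤ |∫ z in (0:ℝ)..l, (x' z)^2| := le_abs_self _
    rw [hNx'sq]
    exact h2.trans hcs
  have hNx'le : Nx' ≤ (l/π) * Nx'' := by
    rcases eq_or_lt_of_le hNx'0 with h0 | hpos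
    · rw [← h0]; positivity
    · refine le_of_mul_le_mul_right ?_ hpos
      calc Nx' * Nx' = Nx'^2 := by ring
        _ ≤ Nx * Nx'' := hP
        _ ≤ ((l/π) * Nx') * Nx'' := mul_le_mul_of_nonneg_right hWx hNx''0
        _ = (l/π) * Nx'' * Nx' := by ring
  have hb1 : -2*a^2*R ≤ (-2*π^2*a^2/l^2) * Nx'^2 := by
    have h3 : Nx'^2 ≤ (l/π)^2 * R := by
      calc Nx'^2 ≤ ((l/π) * Nx'')^2 := by
            apply pow_le_pow_left₀ hNx'0 hNx'le
        _ = (l/π)^2 * R := by rw [mul_pow, hNx''sq]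
    have hfact : (π/l)^2 * (l/π)^2 = 1 := by field_simp
    have h5 : (π/l)^2 * Nx'^2 ≤ R := by
      calc (π/l)^2 * Nx'^2 ≤ (π/l)^2 * ((l/π)^2 * R) :=
            mul_le_mul_of_nonneg_left h3 (sq_nonneg _)
        _ = R := by rw [← mul_assoc, hfact, one_mul]
    have h6 : (-2*a^2 : ℝ) ≤ 0 := by
      have h8 : (0:ℝ) ≤ 2*a^2 := by positivity
      linarith only [h8]
    have h7 := mul_le_mul_of_nonpos_left h5 h6
    calc -2*a^2*R ≤ -2*a^2*((π/l)^2 * Nx'^2) := by linarith only [h7]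
      _ = (-2*π^2*a^2/l^2) * Nx'^2 := by field_simp
  -- Φ term
  have hbΦ : (∫ z in (0:ℝ)..l, Φ' (x z) * x' z * x' z) ≤ 0 := by
    have h1 : (0:ℝ) ≤ ∫ z in (0:ℝ)..l, -(Φ' (x z) * x' z * x' z) := by
      apply intervalIntegral.integral_nonneg hll
      intro u _
      have h2 : -(Φ' (x u) * x' u * x' u) = (-Φ' (x u)) * (x' u * x' u) := by ring
      rw [h2]
      exact mul_nonneg (neg_nonneg.mpr (hΦ'le _)) (mul_self_nonneg _)
    rw [intervalIntegral.integral_neg] at h1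
    linarith
  -- B term
  have hbB : y * (∫ z in (0:ℝ)..l, B' z * x' z) ≤ |y| * (NB * Nx') := by
    have hcs := my_cs hll hB'c hx'cc
    rw [← hNBdef, ← hNx'def] at hcs
    calc y * (∫ z in (0:ℝ)..l, B' z * x' z)
        ≤ |y * (∫ z in (0:ℝ)..l, B' z * x' z)| := le_abs_self _
      _ = |y| * |∫ z in (0:ℝ)..l, B' z * x' z| := abs_mul _ _
      _ ≤ |y| * (NB * Nx') := mul_le_mul_of_nonneg_left hcs (abs_nonneg _)
  -- ξ₁ term
  have hbξ : 2 * (∫ z in (0:ℝ)..l, ξ₁' z * x' z) ≤ ε*Nx'^2 + ε⁻¹*Nξ^2 := by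
    have hcs := my_cs hll hξ₁'c hx'cc
    rw [← hNξdef, ← hNx'def] at hcs
    have h1 : (∫ z in (0:ℝ)..l, ξ₁' z * x' z) ≤ Nξ * Nx' :=
      (le_abs_self _).trans hcs
    have h2 := my_young hε Nx' Nξ
    linarith only [h1, h2]
  -- D term
  have hbD : y * (∫ z in (0:ℝ)..l, D z * x z) ≤ |y| * (ND * ((l/π) * Nx')) := by
    have hcs := my_cs hll hD hxc
    rw [← hNDdef, ← hNxdef] at hcs
    calc y * (∫ z in (0:ℝ)..l, D z * x z)
        ≤ |y * (∫ z in (0:ℝ)..l, D z * x z)| := le_abs_self _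
      _ = |y| * |∫ z in (0:ℝ)..l, D z * x z| := abs_mul _ _
      _ ≤ |y| * (ND * Nx) := mul_le_mul_of_nonneg_left hcs (abs_nonneg _)
      _ ≤ |y| * (ND * ((l/π) * Nx')) := by
          apply mul_le_mul_of_nonneg_left _ (abs_nonneg _)
          exact mul_le_mul_of_nonneg_left hWx hND0
  -- ξ₂ term
  have hbξ₂ : 2*y*ξ₂ ≤ ε*y^2 + ε⁻¹*ξ₂^2 := my_young hε y ξ₂
  -- assemble
  rw [hJ, hIBP_B, hIBP_ξ, hIBP_Φ]
  linarith only [hb1, hbΦ, hbB, hbξ, hbD, hbξ₂]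
end

section
/- Let Φ : ℝ → ℝ be continuously differentiable, and let x, x₀ : [0,l] → ℝ be continuously differentiable with x(0) = x(l) = x₀(0) = x₀(l) = 0. Suppose L₁ ≥ 0 is such that |Φ'(s) − Φ'(s̃)| ≤ L₁·|s − s̃| for all s, s̃ with |s|, |s̃| ≤ √l·max{‖x'‖_{L²}, ‖x₀'‖_{L²}} (a range containing all values of x and x₀). Then ‖(Φ∘x)' − (Φ∘x₀)'‖_{L²} ≤ (L₁·√l·‖x'‖_{L²} + ‖Φ'∘x₀‖_∞)·‖x' − x₀'‖_{L²}. (This is the local Lipschitz estimate for the Nemytskii operator x ↦ Φ∘x in the H¹₀-norm used in the well-posedness argument.) -/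
open Set

/-- `‖f‖_∞` on `[0,l]`. -/
noncomputable def CnormInf (l : ℝ) (f : ℝ → ℝ) : ℝ :=
  sSup ((fun z => |f z|) '' Icc 0 l)


lemma L2norm_nonneg (l : ℝ) (f : ℝ → ℝ) : 0 ≤ L2norm l f := Real.sqrt_nonneg _

lemma sq_intInt {l : ℝ} (hl : 0 ≤ l) {f : ℝ → ℝ} (hf : ContinuousOn f (Icc 0 l)) :
    IntervalIntegrable (fun z => (f z)^2) MeasureTheory.volume 0 l := by
  apply ContinuousOn.intervalIntegrable
  rw [uIcc_of_le hl]; exact hf.pow 2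

lemma mul_intInt {l : ℝ} (hl : 0 ≤ l) {f g : ℝ → ℝ} (hf : ContinuousOn f (Icc 0 l))
    (hg : ContinuousOn g (Icc 0 l)) :
    IntervalIntegrable (fun z => f z * g z) MeasureTheory.volume 0 l := by
  apply ContinuousOn.intervalIntegrable
  rw [uIcc_of_le hl]; exact hf.mul hg

/-- Cauchy–Schwarz. -/
lemma CS {l : ℝ} (hl : 0 ≤ l) {f g : ℝ → ℝ} (hf : ContinuousOn f (Icc 0 l))
    (hg : ContinuousOn g (Icc 0 l)) :
    ∫ z in (0:ℝ)..l, f z * g z ≤ L2norm l f * L2norm l g := by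
  set A := ∫ z in (0:ℝ)..l, (f z)^2 with hA
  set C := ∫ z in (0:ℝ)..l, (g z)^2 with hC
  set B := ∫ z in (0:ℝ)..l, f z * g z with hB
  have hAnn : 0 ≤ A := intervalIntegral.integral_nonneg hl (fun z _ => sq_nonneg _)
  have hCnn : 0 ≤ C := intervalIntegral.integral_nonneg hl (fun z _ => sq_nonneg _)
  have key : ∀ t : ℝ, 0 ≤ C * (t * t) + (-2 * B) * t + A := by
    intro t
    have h1 : (0:ℝ) ≤ ∫ z in (0:ℝ)..l, (f z - t * g z)^2 :=
      intervalIntegral.integral_nonneg hl (fun z _ => sq_nonneg _)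
    have h2 : (∫ z in (0:ℝ)..l, (f z - t * g z)^2)
        = C * (t * t) + (-2 * B) * t + A := by
      have e : (fun z => (f z - t * g z)^2)
          = fun z => (t*t) * (g z)^2 + ((-2*t) * (f z * g z) + (f z)^2) := by
        funext z; ring
      rw [e, intervalIntegral.integral_add ((sq_intInt hl hg).const_mul _)
            (((mul_intInt hl hf hg).const_mul _).add (sq_intInt hl hf)),
          intervalIntegral.integral_add ((mul_intInt hl hf hg).const_mul _) (sq_intInt hl hf),
          intervalIntegral.integral_const_mul, intervalIntegral.integral_const_mul]
      ring
    linarith [h1, h2.symm.le]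
  have hdisc : discrim C (-2*B) A ≤ 0 := discrim_le_zero key
  have hB2 : B^2 ≤ A * C := by
    simp only [discrim] at hdisc; nlinarith
  calc B ≤ |B| := le_abs_self B
    _ = Real.sqrt (B^2) := (Real.sqrt_sq_eq_abs B).symm
    _ ≤ Real.sqrt (A * C) := Real.sqrt_le_sqrt hB2
    _ = L2norm l f * L2norm l g := by rw [Real.sqrt_mul hAnn]; rfl

/-- Minkowski. -/
lemma Mink {l : ℝ} (hl : 0 ≤ l) {f g : ℝ → ℝ} (hf : ContinuousOn f (Icc 0 l))
    (hg : ContinuousOn g (Icc 0 l)) :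
    L2norm l (fun z => f z + g z) ≤ L2norm l f + L2norm l g := by
  have hcs := CS hl hf hg
  have h2 : (∫ z in (0:ℝ)..l, (f z + g z)^2)
      = (∫ z in (0:ℝ)..l, (f z)^2) + 2 * (∫ z in (0:ℝ)..l, f z * g z)
        + (∫ z in (0:ℝ)..l, (g z)^2) := by
    have e : (fun z => (f z + g z)^2)
        = fun z => (f z)^2 + ((2:ℝ) * (f z * g z) + (g z)^2) := by funext z; ring
    rw [e, intervalIntegral.integral_add (sq_intInt hl hf)
          (((mul_intInt hl hf hg).const_mul _).add (sq_intInt hl hg)),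
        intervalIntegral.integral_add ((mul_intInt hl hf hg).const_mul _) (sq_intInt hl hg),
        intervalIntegral.integral_const_mul]
    ring
  have hfn := L2norm_nonneg l f
  have hgn := L2norm_nonneg l g
  have hA : (∫ z in (0:ℝ)..l, (f z)^2) = (L2norm l f)^2 := by
    rw [L2norm, Real.sq_sqrt (intervalIntegral.integral_nonneg hl (fun z _ => sq_nonneg _))]
  have hC : (∫ z in (0:ℝ)..l, (g z)^2) = (L2norm l g)^2 := by
    rw [L2norm, Real.sq_sqrt (intervalIntegral.integral_nonneg hl (fun z _ => sq_nonneg _))]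
  have : (∫ z in (0:ℝ)..l, (f z + g z)^2) ≤ (L2norm l f + L2norm l g)^2 := by
    rw [h2, hA, hC]; nlinarith
  calc L2norm l (fun z => f z + g z) ≤ Real.sqrt ((L2norm l f + L2norm l g)^2) :=
        Real.sqrt_le_sqrt this
    _ = L2norm l f + L2norm l g := Real.sqrt_sq (by linarith)

/-- monotonicity. -/
lemma L2mono {l : ℝ} (hl : 0 ≤ l) {F G : ℝ → ℝ} (hF : ContinuousOn F (Icc 0 l))
    (hG : ContinuousOn G (Icc 0 l)) (h : ∀ z ∈ Icc (0:ℝ) l, |F z| ≤ G z) :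
    L2norm l F ≤ L2norm l G := by
  apply Real.sqrt_le_sqrt
  apply intervalIntegral.integral_mono_on hl (sq_intInt hl hF) (sq_intInt hl hG)
  intro z hz
  have := h z hz
  calc (F z)^2 = |F z|^2 := (sq_abs _).symm
    _ ≤ (G z)^2 := by nlinarith [abs_nonneg (F z)]

/-- Poincaré/embedding. -/
lemma Poin {l : ℝ} (hl : 0 ≤ l) {f f' : ℝ → ℝ}
    (hf : ∀ z ∈ Icc (0:ℝ) l, HasDerivAt f (f' z) z)
    (hf'c : ContinuousOn f' (Icc 0 l)) (hf0 : f 0 = 0) :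
    ∀ z ∈ Icc (0:ℝ) l, |f z| ≤ Real.sqrt l * L2norm l f' := by
  intro z hz
  obtain ⟨hz0, hzl⟩ := hz
  have hsub : Icc (0:ℝ) z ⊆ Icc 0 l := Icc_subset_Icc le_rfl hzl
  have hf'cz : ContinuousOn f' (Icc 0 z) := hf'c.mono hsub
  have hint : IntervalIntegrable f' MeasureTheory.volume 0 z := by
    apply ContinuousOn.intervalIntegrable; rw [uIcc_of_le hz0]; exact hf'cz
  have hftc : ∫ y in (0:ℝ)..z, f' y = f z - f 0 := by
    apply intervalIntegral.integral_eq_sub_of_hasDerivAt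
    · intro t ht; rw [uIcc_of_le hz0] at ht; exact hf t (hsub ht)
    · exact hint
  rw [hf0, sub_zero] at hftc
  have habs : |f z| ≤ ∫ y in (0:ℝ)..z, |f' y| := by
    rw [← hftc]
    exact intervalIntegral.abs_integral_le_integral_abs hz0
  have hcs : (∫ y in (0:ℝ)..z, |f' y| * 1) ≤ L2norm z (fun y => |f' y|) * L2norm z (fun _ => 1) := by
    exact CS hz0 hf'cz.abs continuousOn_const
  have h1 : L2norm z (fun _ : ℝ => (1:ℝ)) = Real.sqrt z := by
    simp [L2norm]
  have habs2 : L2norm z (fun y => |f' y|) = L2norm z f' := by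
    simp only [L2norm, sq_abs]
  have hmono : L2norm z f' ≤ L2norm l f' := by
    apply Real.sqrt_le_sqrt
    rw [← intervalIntegral.integral_add_adjacent_intervals (a := (0:ℝ)) (b := z) (c := l)
      (sq_intInt hz0 (hf'c.mono hsub)) ?_]
    · have : (0:ℝ) ≤ ∫ y in z..l, (f' y)^2 :=
        intervalIntegral.integral_nonneg hzl (fun y _ => sq_nonneg _)
      linarith
    · apply ContinuousOn.intervalIntegrable
      rw [uIcc_of_le hzl]
      exact (hf'c.mono (Icc_subset_Icc hz0 le_rfl)).pow 2
  calc |f z| ≤ ∫ y in (0:ℝ)..z, |f' y| := habs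
    _ = ∫ y in (0:ℝ)..z, |f' y| * 1 := by simp
    _ ≤ L2norm z (fun y => |f' y|) * L2norm z (fun _ => 1) := hcs
    _ = L2norm z f' * Real.sqrt z := by rw [h1, habs2]
    _ ≤ L2norm l f' * Real.sqrt l := by
        apply mul_le_mul hmono (Real.sqrt_le_sqrt hzl) (Real.sqrt_nonneg _) (L2norm_nonneg _ _)
    _ = Real.sqrt l * L2norm l f' := mul_comm _ _

lemma L2smul (l c : ℝ) (h : ℝ → ℝ) :
    L2norm l (fun z => c * h z) = |c| * L2norm l h := by
  simp only [L2norm, mul_pow]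
  rw [intervalIntegral.integral_const_mul, Real.sqrt_mul (sq_nonneg c), Real.sqrt_sq_eq_abs]

lemma L2abs (l : ℝ) (h : ℝ → ℝ) : L2norm l (fun z => |h z|) = L2norm l h := by
  simp only [L2norm, sq_abs]
/-- local Lipschitz estimate for the Nemytskii operator `x ↦ Φ∘x`
in the `H¹₀`-norm:  `‖(Φ∘x)' − (Φ∘x₀)'‖_{L²} ≤ (L₁·√l·‖x'‖_{L²} + ‖Φ'∘x₀‖_∞)·‖x' − x₀'‖_{L²}`,
where `L₁` is a Lipschitz constant of `Φ'` on the range `|s| ≤ √l·max{‖x'‖_{L²}, ‖x₀'‖_{L²}}`. -/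
theorem stmt14 (l : ℝ) (hl : 0 < l)
    (Φ Φ' : ℝ → ℝ) (hΦ : ∀ s, HasDerivAt Φ (Φ' s) s) (hΦ'c : Continuous Φ')
    (x x' x₀ x₀' : ℝ → ℝ)
    (hx : ∀ z ∈ Icc (0:ℝ) l, HasDerivAt x (x' z) z)
    (hx₀ : ∀ z ∈ Icc (0:ℝ) l, HasDerivAt x₀ (x₀' z) z)
    (hx'c : ContinuousOn x' (Icc 0 l)) (hx₀'c : ContinuousOn x₀' (Icc 0 l))
    (hx0 : x 0 = 0) (hxl : x l = 0) (hx₀0 : x₀ 0 = 0) (hx₀l : x₀ l = 0)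
    (L₁ : ℝ) (hL₁ : 0 ≤ L₁)
    (hLip : ∀ s s₂ : ℝ,
      |s| ≤ Real.sqrt l * max (L2norm l x') (L2norm l x₀') →
      |s₂| ≤ Real.sqrt l * max (L2norm l x') (L2norm l x₀') →
      |Φ' s - Φ' s₂| ≤ L₁ * |s - s₂|) :
    L2norm l (fun z => Φ' (x z) * x' z - Φ' (x₀ z) * x₀' z) ≤
      (L₁ * Real.sqrt l * L2norm l x' + CnormInf l (fun z => Φ' (x₀ z))) *
        L2norm l (fun z => x' z - x₀' z) := by
  have hl' : (0:ℝ) ≤ l := hl.le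
  have hxc : ContinuousOn x (Icc 0 l) := fun z hz =>
    (hx z hz).continuousAt.continuousWithinAt
  have hx₀c : ContinuousOn x₀ (Icc 0 l) := fun z hz =>
    (hx₀ z hz).continuousAt.continuousWithinAt
  have hΦx : ContinuousOn (fun z => Φ' (x z)) (Icc 0 l) :=
    hΦ'c.comp_continuousOn hxc
  have hΦx₀ : ContinuousOn (fun z => Φ' (x₀ z)) (Icc 0 l) :=
    hΦ'c.comp_continuousOn hx₀c
  set M := CnormInf l (fun z => Φ' (x₀ z)) with hMdef
  have hbdd : BddAbove ((fun z => |Φ' (x₀ z)|) '' Icc 0 l) :=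
    (isCompact_Icc.image_of_continuousOn hΦx₀.abs).bddAbove
  have hM : ∀ z ∈ Icc (0:ℝ) l, |Φ' (x₀ z)| ≤ M := fun z hz =>
    le_csSup hbdd (mem_image_of_mem _ hz)
  have hMnn : 0 ≤ M := le_trans (abs_nonneg _) (hM 0 ⟨le_rfl, hl'⟩)
  set D' := fun z => x' z - x₀' z with hD'def
  have hD'c : ContinuousOn D' (Icc 0 l) := hx'c.sub hx₀'c
  have hD : ∀ z ∈ Icc (0:ℝ) l, |x z - x₀ z| ≤ Real.sqrt l * L2norm l D' := by
    apply Poin hl' (f := fun z => x z - x₀ z) (fun z hz => (hx z hz).sub (hx₀ z hz)) hD'c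
    rw [hx0, hx₀0, sub_zero]
  have hrange : ∀ z ∈ Icc (0:ℝ) l,
      |x z| ≤ Real.sqrt l * max (L2norm l x') (L2norm l x₀') ∧
      |x₀ z| ≤ Real.sqrt l * max (L2norm l x') (L2norm l x₀') := by
    intro z hz
    constructor
    · exact (Poin hl' hx hx'c hx0 z hz).trans
        (mul_le_mul_of_nonneg_left (le_max_left _ _) (Real.sqrt_nonneg _))
    · exact (Poin hl' hx₀ hx₀'c hx₀0 z hz).trans
        (mul_le_mul_of_nonneg_left (le_max_right _ _) (Real.sqrt_nonneg _))
  set c₁ := L₁ * Real.sqrt l * L2norm l D' with hc₁def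
  have hc₁nn : 0 ≤ c₁ := mul_nonneg (mul_nonneg hL₁ (Real.sqrt_nonneg _)) (L2norm_nonneg _ _)
  have hpt : ∀ z ∈ Icc (0:ℝ) l,
      |Φ' (x z) * x' z - Φ' (x₀ z) * x₀' z| ≤ c₁ * |x' z| + M * |D' z| := by
    intro z hz
    have e : Φ' (x z) * x' z - Φ' (x₀ z) * x₀' z
        = (Φ' (x z) - Φ' (x₀ z)) * x' z + Φ' (x₀ z) * (x' z - x₀' z) := by ring
    rw [e]
    calc |(Φ' (x z) - Φ' (x₀ z)) * x' z + Φ' (x₀ z) * (x' z - x₀' z)|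
        ≤ |(Φ' (x z) - Φ' (x₀ z)) * x' z| + |Φ' (x₀ z) * (x' z - x₀' z)| := abs_add_le _ _
      _ = |Φ' (x z) - Φ' (x₀ z)| * |x' z| + |Φ' (x₀ z)| * |x' z - x₀' z| := by
          rw [abs_mul, abs_mul]
      _ ≤ c₁ * |x' z| + M * |D' z| := by
          apply add_le_add
          · apply mul_le_mul_of_nonneg_right _ (abs_nonneg _)
            calc |Φ' (x z) - Φ' (x₀ z)| ≤ L₁ * |x z - x₀ z| :=
                  hLip _ _ (hrange z hz).1 (hrange z hz).2
              _ ≤ L₁ * (Real.sqrt l * L2norm l D') :=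
                  mul_le_mul_of_nonneg_left (hD z hz) hL₁
              _ = c₁ := by rw [hc₁def]; ring
          · exact mul_le_mul_of_nonneg_right (hM z hz) (abs_nonneg _)
  have hFc : ContinuousOn (fun z => Φ' (x z) * x' z - Φ' (x₀ z) * x₀' z) (Icc 0 l) :=
    (hΦx.mul hx'c).sub (hΦx₀.mul hx₀'c)
  have hGc : ContinuousOn (fun z => c₁ * |x' z| + M * |D' z|) (Icc 0 l) :=
    (hx'c.abs.const_smul c₁).add (hD'c.abs.const_smul M)
  have step1 : L2norm l (fun z => Φ' (x z) * x' z - Φ' (x₀ z) * x₀' z)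
      ≤ L2norm l (fun z => c₁ * |x' z| + M * |D' z|) :=
    L2mono hl' hFc hGc hpt
  have step2 : L2norm l (fun z => c₁ * |x' z| + M * |D' z|)
      ≤ c₁ * L2norm l x' + M * L2norm l D' := by
    calc L2norm l (fun z => c₁ * |x' z| + M * |D' z|)
        ≤ L2norm l (fun z => c₁ * |x' z|) + L2norm l (fun z => M * |D' z|) :=
          Mink hl' (hx'c.abs.const_smul c₁) (hD'c.abs.const_smul M)
      _ = |c₁| * L2norm l (fun z => |x' z|) + |M| * L2norm l (fun z => |D' z|) := by
          rw [L2smul, L2smul]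
      _ = c₁ * L2norm l x' + M * L2norm l D' := by
          rw [L2abs, L2abs, abs_of_nonneg hc₁nn, abs_of_nonneg hMnn]
  calc L2norm l (fun z => Φ' (x z) * x' z - Φ' (x₀ z) * x₀' z)
      ≤ c₁ * L2norm l x' + M * L2norm l D' := step1.trans step2
    _ = (L₁ * Real.sqrt l * L2norm l x' + M) * L2norm l D' := by rw [hc₁def]; ring
    _ = (L₁ * Real.sqrt l * L2norm l x' + CnormInf l (fun z => Φ' (x₀ z))) *
        L2norm l (fun z => x' z - x₀' z) := rfl
end
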